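/- arXiv:2007.07746 — 5 statements merged into one kernel-verified Lean document; each statement's English description precedes it below -/
import Mathlib

section
/- Let F be a field of characteristic 2, let g be the 2-dimensional Lie algebra over F with basis e₋₁, e₀ and bracket [e₋₁, e₀] = e₋₁. Define Δ: g → g by Δ(k₋₁e₋₁ + k₀e₀) = k₀e₋₁ if k₋₁ ≠ 0, and Δ(k₋₁e₋₁ + k₀e₀) = 0 if k₋₁ = 0. Then Δ is a 2-local derivation on g. -/
open scoped Classical

lemma mk_der (F : Type*) [Field F] (L : Type*) [LieRing L] [LieAlgebra F L]
    (b : Module.Basis (Fin 2) F L) (hb : ⁅b 0, b 1⁆ = b 0) (α β : F) :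
    ∃ D : LieDerivation F L L, D (b 0) = α • b 0 ∧ D (b 1) = β • b 0 := by
  have hb' : ⁅b 1, b 0⁆ = -b 0 := by rw [← lie_skew, hb]
  set f : L →ₗ[F] L := b.constr F ![α • b 0, β • b 0] with hf
  have hf0 : f (b 0) = α • b 0 := by simp [hf, Module.Basis.constr_basis]
  have hf1 : f (b 1) = β • b 0 := by simp [hf, Module.Basis.constr_basis]
  refine ⟨⟨f, ?_⟩, hf0, hf1⟩
  intro x y
  have hx : x = b.repr x 0 • b 0 + b.repr x 1 • b 1 := by
    simpa only [Fin.sum_univ_two] using (b.sum_repr x).symm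
  have hy : y = b.repr y 0 • b 0 + b.repr y 1 • b 1 := by
    simpa only [Fin.sum_univ_two] using (b.sum_repr y).symm
  rw [hx, hy]
  simp only [lie_add, add_lie, lie_smul, smul_lie, hb, hb', lie_self, smul_zero,
    zero_add, add_zero, smul_neg, map_add, map_smul, map_neg, hf0, hf1]
  module

/-- Over a field of characteristic `2`, on the 2-dimensional Lie algebra with
basis `e₋₁ = b 0`, `e₀ = b 1` and `[e₋₁, e₀] = e₋₁`, the map
`Δ (k₋₁ e₋₁ + k₀ e₀) = k₀ e₋₁` if `k₋₁ ≠ 0` and `= 0` if `k₋₁ = 0`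
is a 2-local derivation. -/
theorem witt1_char2_twoLocalDerivation (F : Type*) [Field F] [CharP F 2]
    (L : Type*) [LieRing L] [LieAlgebra F L]
    (b : Module.Basis (Fin 2) F L) (hb : ⁅b 0, b 1⁆ = b 0)
    (Δ : L → L)
    (hΔ : ∀ k₁ k₀ : F, Δ (k₁ • b 0 + k₀ • b 1) = if k₁ ≠ 0 then k₀ • b 0 else 0) :
    ∀ x y : L, ∃ D : LieDerivation F L L, Δ x = D x ∧ Δ y = D y := by
  intro x y
  set x1 := b.repr x 0 with hx1d
  set x0 := b.repr x 1 with hx0d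
  set y1 := b.repr y 0 with hy1d
  set y0 := b.repr y 1 with hy0d
  have hx : x = x1 • b 0 + x0 • b 1 := by
    simpa only [Fin.sum_univ_two] using (b.sum_repr x).symm
  have hy : y = y1 • b 0 + y0 • b 1 := by
    simpa only [Fin.sum_univ_two] using (b.sum_repr y).symm
  have hΔx : Δ x = if x1 ≠ 0 then x0 • b 0 else 0 := by rw [hx, hΔ]
  have hΔy : Δ y = if y1 ≠ 0 then y0 • b 0 else 0 := by rw [hy, hΔ]
  -- choose α β
  have key : ∀ α β : F,
      (if x1 ≠ 0 then x0 • b 0 else 0) = (α * x1 + β * x0) • b 0 →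
      (if y1 ≠ 0 then y0 • b 0 else 0) = (α * y1 + β * y0) • b 0 →
      ∃ D : LieDerivation F L L, Δ x = D x ∧ Δ y = D y := by
    intro α β h1 h2
    obtain ⟨D, hD0, hD1⟩ := mk_der F L b hb α β
    have hDx : D x = (α * x1 + β * x0) • b 0 := by
      rw [hx]; simp [hD0, hD1, smul_smul]; module
    have hDy : D y = (α * y1 + β * y0) • b 0 := by
      rw [hy]; simp [hD0, hD1, smul_smul]; module
    exact ⟨D, by rw [hΔx, hDx, h1], by rw [hΔy, hDy, h2]⟩
  by_cases hx1 : x1 = 0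
  · by_cases hy1 : y1 = 0
    · exact key 0 0 (by simp [hx1]) (by simp [hy1])
    · by_cases hx0 : x0 = 0
      · exact key 0 1 (by simp [hx1, hx0]) (by simp [hy1])
      · exact key (y0 / y1) 0 (by simp [hx1]) (by simp [hy1])
  · by_cases hy1 : y1 = 0
    · by_cases hy0 : y0 = 0
      · exact key 0 1 (by simp [hx1]) (by simp [hy1, hy0])
      · exact key (x0 / x1) 0 (by simp [hx1]) (by simp [hy1])
    · exact key 0 1 (by simp [hx1]) (by simp [hy1])
end

section
/- Let F be a field of prime characteristic p, and A_n = F[x₁,...,x_n]/(x₁^p,...,x_n^p) the truncated polynomial algebra. For 1 ≤ i ≤ n define the derivation 𝒟_i = D_i + Σ_{j=i}^{n-1} (Π_{k=i}^{j} x_k^{p-1}) D_{j+1} of A_n, where D_i is the partial derivative with respect to x_i. If p = 2 then 𝒟_i² = 𝒟_{i+1} as derivations of A_n, for 1 ≤ i ≤ n−1, and 𝒟_n² = 0. -/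
open MvPolynomial

set_option synthInstance.maxHeartbeats 400000
set_option maxHeartbeats 1000000

noncomputable section

def truncIdeal (F : Type*) [Field F] (p n : ℕ) : Ideal (MvPolynomial (Fin n) F) :=
  Ideal.span (Set.range fun i => (X i : MvPolynomial (Fin n) F) ^ p)

abbrev TP (F : Type*) [Field F] (p n : ℕ) :=
  MvPolynomial (Fin n) F ⧸ truncIdeal F p n

abbrev Wn (F : Type*) [Field F] (p n : ℕ) := Derivation F (TP F p n) (TP F p n)

def xv (F : Type*) [Field F] (p n : ℕ) (i : Fin n) : TP F p n :=
  Ideal.Quotient.mk _ (X i)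

def xm (F : Type*) [Field F] (p n : ℕ) (α : Fin n → ℕ) : TP F p n :=
  Ideal.Quotient.mk _ (∏ j, X j ^ α j)

/-- `D` is the family of coordinate partial derivatives `D₁, …, D_n` of `A_n`. -/
def IsCoordDer (F : Type*) [Field F] (p n : ℕ) (D : Fin n → Wn F p n) : Prop :=
  ∀ i j : Fin n, D i (xv F p n j) = if i = j then 1 else 0

def scrD (F : Type*) [Field F] (p n : ℕ) (D : Fin n → Wn F p n) (i : Fin n) :
    Wn F p n :=
  ∑ j : Fin n, if i ≤ j then
    (∏ k : Fin n, if i ≤ k ∧ k < j then xv F p n k ^ (p - 1) else 1) • D j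
  else 0

def gradeW (F : Type*) [Field F] (p n : ℕ) (D : Fin n → Wn F p n) (m : ℕ) :
    Submodule F (Wn F p n) :=
  Submodule.span F {w | ∃ (α : Fin n → ℕ) (j : Fin n),
    (∀ l, α l ≤ p - 1) ∧ (∑ l, α l) = m ∧ w = xm F p n α • D j}

def gradeWZ (F : Type*) [Field F] (p n : ℕ) (D : Fin n → Wn F p n) (k : ℤ) :
    Submodule F (Wn F p n) :=
  Submodule.span F {w | ∃ (α : Fin n → ℕ) (j : Fin n),
    (∀ l, α l ≤ p - 1) ∧ ((∑ l, α l : ℕ) : ℤ) = k + 1 ∧ w = xm F p n α • D j}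

def IsRegularVec (F : Type*) [Field F] (p n : ℕ) (lam : Fin n → F) : Prop :=
  ∀ μ : Fin n → ZMod p, (∑ i, ((μ i).val : F) * lam i) = 0 → μ = 0

end


noncomputable section Aux

variable {F : Type*} [Field F] {n : ℕ}

lemma xv_sq (l : Fin n) : xv F 2 n l * xv F 2 n l = 0 := by
  show Ideal.Quotient.mk _ (X l) * Ideal.Quotient.mk _ (X l) = 0
  rw [← map_mul, ← sq, Ideal.Quotient.eq_zero_iff_mem]
  exact Ideal.subset_span ⟨l, rfl⟩

lemma tp_add_self [CharP F 2] (a : TP F 2 n) : a + a = 0 := by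
  have h2 : (2 : TP F 2 n) = 0 :=
    calc (2 : TP F 2 n) = algebraMap F (TP F 2 n) 2 := (map_ofNat _ 2).symm
      _ = algebraMap F (TP F 2 n) 0 := congrArg _ CharTwo.two_eq_zero
      _ = 0 := map_zero _
  rw [← two_mul, h2, zero_mul]

lemma tp_ext {d1 d2 : Wn F 2 n} (h : ∀ i, d1 (xv F 2 n i) = d2 (xv F 2 n i)) : d1 = d2 := by
  apply Derivation.ext_of_adjoin_eq_top (Set.range (xv F 2 n))
  · have hsurj : Function.Surjective (Ideal.Quotient.mkₐ F (truncIdeal F 2 n)) :=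
      Ideal.Quotient.mkₐ_surjective F _
    have hr : Set.range (xv F 2 n)
        = (Ideal.Quotient.mkₐ F (truncIdeal F 2 n)) '' (Set.range X) := by
      rw [← Set.range_comp]; rfl
    rw [hr, ← AlgHom.map_adjoin, MvPolynomial.adjoin_range_X, Algebra.map_top]
    exact (AlgHom.range_eq_top _).mpr hsurj
  · rintro _ ⟨i, rfl⟩; exact h i

lemma der_sum_apply {ι : Type*} (s : Finset ι) (d : ι → Wn F 2 n) (a : TP F 2 n) :
    (∑ j ∈ s, d j) a = ∑ j ∈ s, d j a := by
  induction s using Finset.cons_induction with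
  | empty => simp
  | cons j s hj ih => rw [Finset.sum_cons, Finset.sum_cons, Derivation.add_apply, ih]

lemma der_prod {ι : Type*} [DecidableEq ι] (d : Wn F 2 n) (s : Finset ι) (f : ι → TP F 2 n) :
    d (∏ k ∈ s, f k) = ∑ k ∈ s, (∏ k' ∈ s.erase k, f k') * d (f k) := by
  induction s using Finset.induction with
  | empty => simp
  | @insert j s hj ih =>
    rw [Finset.prod_insert hj, Derivation.leibniz, ih, Finset.sum_insert hj,
      Finset.erase_insert hj, smul_eq_mul, smul_eq_mul, Finset.mul_sum]
    rw [add_comm]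
    congr 1
    refine Finset.sum_congr rfl fun k hk => ?_
    have hkj : k ≠ j := fun h => hj (h ▸ hk)
    rw [Finset.erase_insert_of_ne (Ne.symm hkj),
      Finset.prod_insert (fun h => hj (Finset.mem_of_mem_erase h)), mul_assoc]

def tpP (F : Type*) [Field F] (n : ℕ) (i j : Fin n) : TP F 2 n :=
  ∏ k : Fin n, if i ≤ k ∧ k < j then xv F 2 n k else 1

lemma tpP_self (i : Fin n) : tpP F n i i = 1 :=
  Finset.prod_eq_one fun k _ => if_neg (fun h => absurd h.2 (not_lt_of_ge h.1))

lemma scrD_xv (D : Fin n → Wn F 2 n) (hD : IsCoordDer F 2 n D) (i j : Fin n) :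
    scrD F 2 n D i (xv F 2 n j) = if i ≤ j then tpP F n i j else 0 := by
  rw [scrD, der_sum_apply, Finset.sum_eq_single j]
  · by_cases h : i ≤ j
    · rw [if_pos h, if_pos h, Derivation.smul_apply, hD, if_pos rfl, smul_eq_mul, mul_one, tpP]
      refine Finset.prod_congr rfl fun k _ => ?_
      by_cases hc : i ≤ k ∧ k < j
      · rw [if_pos hc, if_pos hc, show (2 - 1 : ℕ) = 1 from rfl, pow_one]
      · rw [if_neg hc, if_neg hc]
    · rw [if_neg h, if_neg h, Derivation.zero_apply]
  · intro j' _ hne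
    by_cases h : i ≤ j'
    · rw [if_pos h, Derivation.smul_apply, hD, if_neg hne, smul_zero]
    · rw [if_neg h, Derivation.zero_apply]
  · exact fun h => absurd (Finset.mem_univ j) h

lemma scrD_tpP (D : Fin n → Wn F 2 n) (hD : IsCoordDer F 2 n D) (i j : Fin n) (hij : i < j) :
    scrD F 2 n D i (tpP F n i j)
      = ∏ k ∈ Finset.univ.erase i, (if i ≤ k ∧ k < j then xv F 2 n k else 1) := by
  rw [tpP, der_prod, Finset.sum_eq_single i]
  · rw [if_pos ⟨le_refl i, hij⟩, scrD_xv D hD, if_pos (le_refl i), tpP_self, mul_one]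
  · intro k _ hki
    by_cases hc : i ≤ k ∧ k < j
    · have hik : i < k := lt_of_le_of_ne hc.1 (Ne.symm hki)
      have h1 : i ∈ Finset.univ.erase k := Finset.mem_erase.mpr ⟨Ne.symm hki, Finset.mem_univ i⟩
      rw [if_pos hc, scrD_xv D hD, if_pos hc.1,
        ← Finset.mul_prod_erase _ _ h1, if_pos ⟨le_refl i, hij⟩, tpP,
        ← Finset.mul_prod_erase _ _ (Finset.mem_univ i), if_pos ⟨le_refl i, hik⟩,
        mul_mul_mul_comm, xv_sq, zero_mul]
    · rw [if_neg hc, Derivation.map_one_eq_zero, mul_zero]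
  · exact fun h => absurd (Finset.mem_univ i) h

def sqd [CharP F 2] (d : Wn F 2 n) : Wn F 2 n where
  toLinearMap := d.toLinearMap ∘ₗ d.toLinearMap
  map_one_eq_zero' := by
    simp only [LinearMap.coe_comp, Function.comp_apply, Derivation.coeFn_coe,
      Derivation.map_one_eq_zero, map_zero]
  leibniz' a b := by
    simp only [LinearMap.coe_comp, Function.comp_apply, Derivation.coeFn_coe,
      Derivation.leibniz, map_add, smul_eq_mul]
    have hcomm : d b * d a + d a * d b = 0 := by rw [mul_comm]; exact tp_add_self _
    linear_combination hcomm

lemma sqd_apply [CharP F 2] (d : Wn F 2 n) (a : TP F 2 n) : sqd d a = d (d a) := rfl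

end Aux

/-- For `p = 2`, one has `𝒟ᵢ² = 𝒟ᵢ₊₁` (for `1 ≤ i ≤ n-1`) and `𝒟ₙ² = 0`,
where `𝒟ᵢ = Dᵢ + Σ_{j=i}^{n-1} (Π_{k=i}^{j} x_k^{p-1}) D_{j+1}`. -/
theorem scrD_sq_char_two (F : Type*) [Field F] [CharP F 2] (n : ℕ)
    (D : Fin n → Wn F 2 n) (hD : IsCoordDer F 2 n D) :
    (∀ (i : Fin n) (h : i.val + 1 < n) (a : TP F 2 n),
        scrD F 2 n D i (scrD F 2 n D i a) = scrD F 2 n D ⟨i.val + 1, h⟩ a) ∧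
    (∀ (h : 0 < n) (a : TP F 2 n),
        scrD F 2 n D ⟨n - 1, Nat.sub_lt h Nat.one_pos⟩
          (scrD F 2 n D ⟨n - 1, Nat.sub_lt h Nat.one_pos⟩ a) = 0) := by
  
  constructor
  · intro i h a
    set i' : Fin n := ⟨i.val + 1, h⟩ with hi'
    have key : sqd (scrD F 2 n D i) = scrD F 2 n D i' := by
      apply tp_ext
      intro j
      rw [sqd_apply, scrD_xv D hD i j, scrD_xv D hD i' j]
      by_cases hij : i ≤ j
      · rcases eq_or_lt_of_le hij with heq | hlt
        · rw [if_pos hij, ← heq, tpP_self, Derivation.map_one_eq_zero,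
            if_neg (show ¬ i' ≤ i by simp only [Fin.le_def, hi', Fin.val_mk]; omega)]
        · rw [if_pos hij, scrD_tpP D hD i j hlt,
            if_pos (show i' ≤ j by simp only [Fin.le_def, Fin.lt_def, hi', Fin.val_mk] at hlt ⊢; omega), tpP]
          have h1 : (∏ k ∈ Finset.univ.erase i, if i' ≤ k ∧ k < j then xv F 2 n k else 1)
              = ∏ k : Fin n, if i' ≤ k ∧ k < j then xv F 2 n k else 1 :=
            Finset.prod_erase _ (if_neg (fun hc => by
              have := hc.1; simp only [Fin.le_def, hi', Fin.val_mk] at this; omega))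
          rw [← h1]
          refine Finset.prod_congr rfl fun k hk => ?_
          have hk' : k ≠ i := (Finset.mem_erase.mp hk).1
          have hv : k.val ≠ i.val := fun hv => hk' (Fin.ext hv)
          refine if_congr ?_ rfl rfl
          simp only [Fin.le_def, Fin.lt_def, hi', Fin.val_mk]
          constructor <;> rintro ⟨h1, h2⟩ <;> exact ⟨by omega, h2⟩
      · rw [if_neg hij, map_zero,
          if_neg (show ¬ i' ≤ j by
            simp only [Fin.le_def, not_le, hi', Fin.val_mk] at hij ⊢; omega)]
    calc scrD F 2 n D i (scrD F 2 n D i a) = sqd (scrD F 2 n D i) a := (sqd_apply _ a).symm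
      _ = scrD F 2 n D i' a := by rw [key]
  · intro h a
    set i : Fin n := ⟨n - 1, Nat.sub_lt h Nat.one_pos⟩ with hi
    have key : sqd (scrD F 2 n D i) = 0 := by
      apply tp_ext
      intro j
      rw [sqd_apply, scrD_xv D hD i j, Derivation.zero_apply]
      by_cases hij : i ≤ j
      · have hji : j = i := by
          have := j.isLt
          apply Fin.ext
          simp only [Fin.le_def, hi, Fin.val_mk] at hij
          simp only [hi, Fin.val_mk]
          omega
        rw [if_pos hij, hji, tpP_self, Derivation.map_one_eq_zero]
      · rw [if_neg hij, map_zero]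
    calc scrD F 2 n D i (scrD F 2 n D i a) = sqd (scrD F 2 n D i) a := (sqd_apply _ a).symm
      _ = 0 := by rw [key]; exact Derivation.zero_apply a
end

section
/- Let F be a field of prime characteristic p, A_n = F[x₁,...,x_n]/(x₁^p,...,x_n^p), W_n = Der(A_n), and 𝒟_i = D_i + Σ_{j=i}^{n-1}(Π_{k=i}^{j} x_k^{p-1}) D_{j+1}. Then 𝒟_i = (−1)^{i−1} 𝒟₁^{p^{i−1}} (the p^{i−1}-st power as a linear operator on A_n) for 1 ≤ i ≤ n. -/
open MvPolynomial

set_option synthInstance.maxHeartbeats 400000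
set_option maxHeartbeats 1000000

section aux
variable {F : Type*} [Field F] {A : Type*} [CommRing A] [Algebra F A]

theorem my_iter_leibniz (d : Derivation F A A) (a b : A) (m : ℕ) :
    (d.toLinearMap ^ m) (a * b) =
      ∑ k ∈ Finset.range (m + 1),
        m.choose k • ((d.toLinearMap ^ k) a * (d.toLinearMap ^ (m - k)) b) := by
  induction m with
  | zero => simp
  | succ m ih =>
    have hstep : ∀ (l : ℕ) (x : A), d.toLinearMap ((d.toLinearMap ^ l) x) = (d.toLinearMap ^ (l+1)) x := by
      intro l x; rw [pow_succ', Module.End.mul_apply]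
    rw [← hstep, ih, map_sum]
    have hterm : ∀ k, d.toLinearMap
        (m.choose k • ((d.toLinearMap ^ k) a * (d.toLinearMap ^ (m - k)) b)) =
        m.choose k • ((d.toLinearMap ^ (k+1)) a * (d.toLinearMap ^ (m - k)) b)
        + m.choose k • ((d.toLinearMap ^ k) a * (d.toLinearMap ^ (m - k + 1)) b) := by
      intro k
      rw [map_nsmul]
      have h2 : d.toLinearMap ((d.toLinearMap ^ k) a * (d.toLinearMap ^ (m-k)) b) =
          (d.toLinearMap ^ (k+1)) a * (d.toLinearMap ^ (m - k)) b
          + (d.toLinearMap ^ k) a * (d.toLinearMap ^ (m - k + 1)) b := by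
        have h3 := d.leibniz ((d.toLinearMap ^ k) a) ((d.toLinearMap ^ (m-k)) b)
        simp only [Derivation.coeFn_coe]
        rw [h3, smul_eq_mul, smul_eq_mul]
        simp only [← Derivation.coeFn_coe, hstep]
        ring
      rw [h2, smul_add]
    simp only [hterm, Finset.sum_add_distrib]
    rw [Finset.sum_range_succ' (fun k => (m+1).choose k • ((d.toLinearMap ^ k) a * (d.toLinearMap ^ (m + 1 - k)) b)) (m+1)]
    simp only [Nat.succ_sub_succ, Nat.choose_succ_succ, add_nsmul, Finset.sum_add_distrib,
      Nat.choose_zero_right, one_smul, pow_zero, Module.End.one_apply, Nat.sub_zero]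
    rw [add_assoc]
    congr 1
    rw [Finset.sum_range_succ' (fun k => Nat.choose m k • ((d.toLinearMap ^ k) a * (d.toLinearMap ^ (m - k + 1)) b)) m]
    rw [Finset.sum_range_succ (fun k => Nat.choose m (k+1) • ((d.toLinearMap ^ (k+1)) a * (d.toLinearMap ^ (m - k)) b)) m]
    simp only [Nat.choose_succ_self, zero_smul, add_zero, Nat.choose_zero_right, one_smul,
      pow_zero, Module.End.one_apply, Nat.sub_zero]
    congr 1
    refine Finset.sum_congr rfl (fun k hk => ?_)
    have : m - (k+1) + 1 = m - k := by
      have := Finset.mem_range.mp hk; omega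
    rw [this]

/-- the `p`-th power of a derivation in characteristic `p` is a derivation -/
def derPowP (p : ℕ) (hp : p.Prime) [CharP F p] (d : Derivation F A A) : Derivation F A A :=
  Derivation.mk' (d.toLinearMap ^ p) (fun a b => by
    rw [my_iter_leibniz d a b p, Finset.sum_range_succ]
    have hmid : ∑ k ∈ Finset.range p,
        p.choose k • ((d.toLinearMap ^ k) a * (d.toLinearMap ^ (p - k)) b)
        = a * (d.toLinearMap ^ p) b := by
      rw [Finset.sum_eq_single_of_mem 0 (Finset.mem_range.mpr hp.pos)]
      · simp
      · intro k hk hk0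
        have hdvd : (p : ℕ) ∣ p.choose k := hp.dvd_choose_self hk0 (Finset.mem_range.mp hk)
        rw [← Nat.cast_smul_eq_nsmul F, (CharP.cast_eq_zero_iff F p _).mpr hdvd, zero_smul]
    rw [hmid]
    simp [smul_eq_mul, mul_comm])

@[simp] theorem derPowP_toLinearMap (p : ℕ) (hp : p.Prime) [CharP F p] (d : Derivation F A A) :
    (derPowP p hp d).toLinearMap = d.toLinearMap ^ p :=
  Derivation.coe_mk'_linearMap _ _

theorem derivation_sum_apply {ι : Type*} (s : Finset ι) (f : ι → Derivation F A A) (x : A) :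
    (∑ i ∈ s, f i) x = ∑ i ∈ s, f i x := by
  induction s using Finset.cons_induction with
  | empty => simp
  | cons i s hi ih => rw [Finset.sum_cons, Finset.sum_cons, Derivation.add_apply, ih]

end aux

noncomputable section helpers
variable (F : Type*) [Field F] (p n : ℕ)

theorem derivation_sum_apply' {ι : Type*} (s : Finset ι) (f : ι → Wn F p n) (x : TP F p n) :
    (∑ i ∈ s, f i) x = ∑ i ∈ s, f i x := by
  induction s using Finset.cons_induction with
  | empty => simp
  | cons i s hi ih => rw [Finset.sum_cons, Finset.sum_cons, Derivation.add_apply, ih]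

/-- monomial coefficient of `scrD` -/
def Mprod (i j : Fin n) : TP F p n :=
  ∏ k : Fin n, if i ≤ k ∧ k < j then xv F p n k ^ (p - 1) else 1

theorem xv_pow_p (i : Fin n) : xv F p n i ^ p = 0 := by
  rw [xv, ← map_pow, Ideal.Quotient.eq_zero_iff_mem]
  exact Ideal.subset_span ⟨i, rfl⟩

theorem adjoin_xv : Algebra.adjoin F (Set.range (xv F p n)) = ⊤ := by
  have : Set.range (xv F p n) =
      (Ideal.Quotient.mkₐ F (truncIdeal F p n)) '' (Set.range (X : Fin n → MvPolynomial (Fin n) F)) := by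
    rw [← Set.range_comp]; rfl
  rw [this, ← AlgHom.map_adjoin, MvPolynomial.adjoin_range_X, Algebra.map_top,
    AlgHom.range_eq_top]
  exact Ideal.Quotient.mkₐ_surjective F _

variable (D : Fin n → Wn F p n)

theorem scrD_apply_xv (hD : IsCoordDer F p n D) (i j : Fin n) :
    scrD F p n D i (xv F p n j) = if i ≤ j then Mprod F p n i j else 0 := by
  rw [scrD, derivation_sum_apply']
  rw [Finset.sum_eq_single_of_mem j (Finset.mem_univ j)]
  · by_cases h : i ≤ j
    · simp only [h, if_true, Derivation.smul_apply, hD j j, if_pos rfl, smul_eq_mul, mul_one,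
        Mprod]
    · simp [h]
  · intro k _ hkj
    by_cases h : i ≤ k
    · simp only [h, if_true, Derivation.smul_apply, hD k j, if_neg hkj, smul_zero]
    · simp [h]


theorem Mprod_self (i : Fin n) : Mprod F p n i i = 1 := by
  rw [Mprod]
  refine Finset.prod_eq_one (fun k _ => ?_)
  rw [if_neg]
  rintro ⟨h1, h2⟩
  exact absurd (lt_of_le_of_lt h1 h2) (lt_irrefl i)

theorem Mprod_factor (i' i j : Fin n) (h : i'.val + 1 = i.val) (hij : i ≤ j) :
    Mprod F p n i' j = xv F p n i' ^ (p - 1) * Mprod F p n i j := by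
  have hi'j : i' < j := by
    rw [Fin.lt_def]; have := Fin.le_def.mp hij; omega
  rw [Mprod, Mprod, ← Finset.mul_prod_erase Finset.univ _ (Finset.mem_univ i'),
    ← Finset.mul_prod_erase Finset.univ
      (fun k => if i ≤ k ∧ k < j then xv F p n k ^ (p - 1) else 1) (Finset.mem_univ i')]
  rw [if_pos ⟨le_refl i', hi'j⟩, if_neg (by
    rintro ⟨h1, _⟩
    have := Fin.le_def.mp h1; omega)]
  rw [one_mul]
  congr 1
  refine Finset.prod_congr rfl (fun k hk => ?_)
  have hki' : k ≠ i' := (Finset.mem_erase.mp hk).1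
  have hcond : (i' ≤ k ∧ k < j) ↔ (i ≤ k ∧ k < j) := by
    have h1 := Fin.le_def (a := i') (b := k)
    have h2 := Fin.le_def (a := i) (b := k)
    have h3 : k.val ≠ i'.val := fun hc => hki' (Fin.ext hc)
    constructor <;> rintro ⟨ha, hb⟩ <;> exact ⟨by rw [Fin.le_def] at ha ⊢; omega, hb⟩
  simp only [hcond]

theorem Mprod_mem_adjoin (i' i j : Fin n) (h : i'.val + 1 = i.val) :
    Mprod F p n i j ∈ Algebra.adjoin F {y | ∃ k : Fin n, i' < k ∧ y = xv F p n k} := by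
  rw [Mprod]
  refine Subalgebra.prod_mem _ (fun k _ => ?_)
  by_cases hc : i ≤ k ∧ k < j
  · rw [if_pos hc]
    refine Subalgebra.pow_mem _ (Algebra.subset_adjoin ?_) _
    refine ⟨k, ?_, rfl⟩
    rw [Fin.lt_def]; have := Fin.le_def.mp hc.1; omega
  · rw [if_neg hc]; exact Subalgebra.one_mem _

theorem scrD_adjoin_mem (hD : IsCoordDer F p n D) (i' : Fin n) :
    ∀ x ∈ Algebra.adjoin F {y | ∃ k : Fin n, i' < k ∧ y = xv F p n k},
      scrD F p n D i' x ∈ Ideal.span {xv F p n i' ^ (p - 1)} := by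
  intro x hx
  induction hx using Algebra.adjoin_induction with
  | mem y hy =>
    obtain ⟨k, hk, rfl⟩ := hy
    rw [scrD_apply_xv F p n D hD, if_pos (le_of_lt hk)]
    have hik : ∃ i : Fin n, i'.val + 1 = i.val := ⟨⟨i'.val + 1, lt_of_le_of_lt (Fin.lt_def.mp hk) k.isLt⟩, rfl⟩
    obtain ⟨i, hi⟩ := hik
    have hle : i ≤ k := by rw [Fin.le_def]; have := Fin.lt_def.mp hk; omega
    rw [Mprod_factor F p n i' i k hi hle]
    exact Ideal.mul_mem_right _ _ (Ideal.subset_span rfl)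
  | algebraMap r => rw [Derivation.map_algebraMap]; exact Ideal.zero_mem _
  | add a b _ _ ha hb => rw [map_add]; exact Ideal.add_mem _ ha hb
  | mul a b _ _ ha hb =>
    rw [Derivation.leibniz, smul_eq_mul, smul_eq_mul]
    exact Ideal.add_mem _ (Ideal.mul_mem_left _ _ hb) (Ideal.mul_mem_left _ _ ha)


theorem scrD_self_one (hD : IsCoordDer F p n D) (i' : Fin n) :
    scrD F p n D i' (xv F p n i') = 1 := by
  rw [scrD_apply_xv F p n D hD, if_pos (le_refl i'), Mprod_self]

theorem key_factorial (hp : p.Prime) (hD : IsCoordDer F p n D) (i' : Fin n) (g : TP F p n)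
    (hg : scrD F p n D i' g ∈ Ideal.span {xv F p n i' ^ (p - 1)}) :
    ∀ m : ℕ, ((scrD F p n D i').toLinearMap ^ m) (xv F p n i' ^ m * g)
      = (m.factorial : F) • g := by
  set d := scrD F p n D i' with hd
  obtain ⟨c, hc⟩ := Ideal.mem_span_singleton'.mp hg
  intro m
  induction m with
  | zero => simp
  | succ m ih =>
    have hstep : ((d.toLinearMap) ^ (m+1)) (xv F p n i' ^ (m+1) * g)
        = (d.toLinearMap ^ m) (d.toLinearMap (xv F p n i' ^ (m+1) * g)) := by
      rw [pow_succ, Module.End.mul_apply]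
    rw [hstep]
    have hdg0 : xv F p n i' ^ (m+1) * d g = 0 := by
      rw [← hc, show xv F p n i' ^ (m+1) * (c * xv F p n i' ^ (p-1))
          = c * (xv F p n i' ^ (m + 1 + (p - 1))) by rw [pow_add]; ring]
      have hmp : m + 1 + (p - 1) = m + p := by have := hp.pos; omega
      rw [hmp, pow_add, xv_pow_p, mul_zero, mul_zero]
    have hleib : d.toLinearMap (xv F p n i' ^ (m+1) * g)
        = (m + 1) • (xv F p n i' ^ m * g) := by
      have h1 : d (xv F p n i' ^ (m+1) * g)
          = xv F p n i' ^ (m+1) * d g + g * d (xv F p n i' ^ (m+1)) := by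
        rw [Derivation.leibniz, smul_eq_mul, smul_eq_mul]
      have h2 : d (xv F p n i' ^ (m+1)) = (m+1) • xv F p n i' ^ m := by
        rw [Derivation.leibniz_pow, scrD_self_one F p n D hD, Nat.add_sub_cancel, smul_eq_mul,
          mul_one]
      show d (xv F p n i' ^ (m+1) * g) = _
      rw [h1, h2, hdg0, zero_add, mul_smul_comm, mul_comm]
    rw [hleib, map_nsmul, ih, ← Nat.cast_smul_eq_nsmul F, smul_smul, ← Nat.cast_mul,
      ← Nat.factorial_succ]

theorem wilson_cast (hp : p.Prime) [CharP F p] : (((p - 1).factorial : F)) = -1 := by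
  haveI : Fact p.Prime := ⟨hp⟩
  have h1 := map_natCast (ZMod.castHom (dvd_refl p) F) ((p-1).factorial)
  rw [← h1, ZMod.wilsons_lemma, map_neg, map_one]

end helpers

section more
variable (F : Type*) [Field F] (p n : ℕ) (D : Fin n → Wn F p n)

theorem pow_apply_one_eq_zero (d : Wn F p n) (t : ℕ) (ht : 1 ≤ t) :
    (d.toLinearMap ^ t) 1 = 0 := by
  obtain ⟨s, rfl⟩ := Nat.exists_eq_add_of_le ht
  rw [add_comm, pow_succ, Module.End.mul_apply]
  have h1 : d.toLinearMap 1 = 0 := d.map_one_eq_zero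
  rw [h1, map_zero]

theorem scrD_pow_eq_neg (hp : p.Prime) [CharP F p] (hD : IsCoordDer F p n D)
    (i' i : Fin n) (h : i'.val + 1 = i.val) :
    (scrD F p n D i').toLinearMap ^ p = - (scrD F p n D i).toLinearMap := by
  set d := scrD F p n D i' with hd
  have hder : derPowP p hp d = - scrD F p n D i := by
    apply Derivation.ext_of_adjoin_eq_top _ (adjoin_xv F p n)
    rintro x ⟨j, rfl⟩
    have hL : (derPowP p hp d) (xv F p n j) = (d.toLinearMap ^ p) (xv F p n j) := by
      rw [derPowP, Derivation.coe_mk']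
    have hR : (- scrD F p n D i) (xv F p n j) = - (scrD F p n D i) (xv F p n j) := by
      rw [Derivation.coe_neg]; rfl
    rw [hL, hR]
    have hsplit : ∀ x : TP F p n, (d.toLinearMap ^ p) x
        = (d.toLinearMap ^ (p - 1)) (d x) := by
      intro x
      rw [← pow_sub_one_mul hp.ne_zero d.toLinearMap, Module.End.mul_apply]
      rfl
    rw [hsplit (xv F p n j)]
    by_cases h1 : i ≤ j
    · have hfac : d (xv F p n j) = xv F p n i' ^ (p - 1) * Mprod F p n i j := by
        rw [hd, scrD_apply_xv F p n D hD, if_pos (by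
          rw [Fin.le_def]; have := Fin.le_def.mp h1; omega),
          Mprod_factor F p n i' i j h h1]
      rw [hfac, key_factorial F p n D hp hD i' (Mprod F p n i j)
        (scrD_adjoin_mem F p n D hD i' _ (Mprod_mem_adjoin F p n i' i j h)) (p - 1),
        wilson_cast F p hp, neg_smul, one_smul, scrD_apply_xv F p n D hD, if_pos h1]
    · rw [scrD_apply_xv F p n D hD i j, if_neg h1, neg_zero]
      by_cases h2 : i' ≤ j
      · have hji' : j = i' := by
          apply Fin.ext
          have ha := Fin.le_def.mp h2
          have hb : ¬ (i.val ≤ j.val) := fun hc => h1 (Fin.le_def.mpr hc)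
          omega
        subst hji'
        rw [hd, scrD_self_one F p n D hD]
        exact pow_apply_one_eq_zero F p n d (p - 1) (by have := hp.two_le; omega)
      · rw [hd, scrD_apply_xv F p n D hD, if_neg h2, map_zero]
  have := congrArg (Derivation.toLinearMap) hder
  rw [derPowP_toLinearMap] at this
  rw [this]
  rfl

end more

/-- `𝒟ᵢ = (−1)^{i−1} 𝒟₁^{p^{i−1}}` as linear operators on `A_n`
(here `i.val` is the zero-based index, so `i.val = i − 1`). -/
theorem scrD_eq_pow_scrD_one (F : Type*) [Field F] (p n : ℕ) (hp : p.Prime)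
    [CharP F p] (D : Fin n → Wn F p n) (hD : IsCoordDer F p n D) :
    ∀ i : Fin n,
      (scrD F p n D i).toLinearMap =
        ((-1 : F) ^ i.val) •
          ((scrD F p n D ⟨0, i.pos⟩).toLinearMap ^ (p ^ i.val)) := by
  intro i
  obtain ⟨iv, hiv⟩ := i
  induction iv with
  | zero => simp
  | succ m ih =>
    have hm : m < n := Nat.lt_of_succ_lt hiv
    have IH := ih hm
    have hkey := scrD_pow_eq_neg F p n D hp hD ⟨m, hm⟩ ⟨m + 1, hiv⟩ rfl
    haveI : Fact p.Prime := ⟨hp⟩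
    have hIH' : (scrD F p n D ⟨0, Nat.zero_lt_of_lt hm⟩).toLinearMap ^ (p ^ m)
        = ((-1 : F) ^ m) • (scrD F p n D ⟨m, hm⟩).toLinearMap := by
      rw [IH, smul_smul, ← mul_pow, neg_mul_neg, one_mul, one_pow, one_smul]
    have hpow : (scrD F p n D ⟨0, Nat.zero_lt_of_lt hm⟩).toLinearMap ^ (p ^ (m + 1))
        = ((scrD F p n D ⟨0, Nat.zero_lt_of_lt hm⟩).toLinearMap ^ (p ^ m)) ^ p := by
      rw [← pow_mul, pow_succ]
    show (scrD F p n D ⟨m + 1, hiv⟩).toLinearMap = ((-1 : F) ^ (m + 1)) •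
      ((scrD F p n D ⟨0, Nat.zero_lt_of_lt hm⟩).toLinearMap ^ (p ^ (m + 1)))
    rw [hpow, hIH', smul_pow, hkey, ← pow_mul, mul_comm m p, pow_mul, neg_one_pow_char F p,
      smul_smul, smul_neg, ← neg_smul]
    have hsc : -((-1:F)^(m+1) * (-1:F)^m) = 1 := by
      rw [← pow_add, Odd.neg_one_pow ⟨m, by omega⟩, neg_neg]
    rw [hsc, one_smul]
end

section
/- Let F be a field of characteristic p = 2 and W_n = Der(A_n) with A_n = F[x₁,...,x_n]/(x₁²,...,x_n²), n ≥ 2. Let 𝒟₁ = D₁ + Σ_{j=1}^{n-1} (x₁⋯x_j) D_{j+1}. Then the centralizer of 𝒟₁ in W_n equals the span of 𝒟₁,...,𝒟_n, where 𝒟_i = D_i + Σ_{j=i}^{n-1} (x_i⋯x_j) D_{j+1}. -/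
open MvPolynomial

set_option synthInstance.maxHeartbeats 400000
set_option maxHeartbeats 1000000

noncomputable section
namespace Cent

variable {F : Type*} [Field F] {n : ℕ}

/-- squarefree monomial in the truncated algebra -/
def ee (F : Type*) [Field F] (n : ℕ) (S : Finset (Fin n)) : TP F 2 n :=
  ∏ i ∈ S, xv F 2 n i

lemma mk_eq_zero_iff (f : MvPolynomial (Fin n) F) :
    Ideal.Quotient.mk (truncIdeal F 2 n) f = 0 ↔ ∀ m ∈ f.support, ∃ i : Fin n, 2 ≤ m i := by
  rw [Ideal.Quotient.eq_zero_iff_mem, truncIdeal]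
  have : (Set.range fun i => (X i : MvPolynomial (Fin n) F) ^ 2)
      = (fun s => monomial s (1 : F)) '' (Set.range fun i : Fin n => Finsupp.single i 2) := by
    rw [← Set.range_comp]
    have : (fun i : Fin n => (X i : MvPolynomial (Fin n) F) ^ 2)
        = (fun s => monomial s (1 : F)) ∘ (fun i : Fin n => Finsupp.single i 2) :=
      funext fun i => X_pow_eq_monomial
    rw [this]
  rw [this, mem_ideal_span_monomial_image]
  constructor
  · rintro h m hm
    obtain ⟨si, ⟨i, rfl⟩, hle⟩ := h m hm
    exact ⟨i, by simpa using hle i⟩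
  · rintro h m hm
    obtain ⟨i, hi⟩ := h m hm
    exact ⟨Finsupp.single i 2, ⟨i, rfl⟩, by
      intro j
      rcases eq_or_ne j i with rfl | hne
      · simpa using hi
      · simp [Finsupp.single_apply, hne.symm]⟩

lemma ee_eq_mk (S : Finset (Fin n)) :
    ee F n S = Ideal.Quotient.mk (truncIdeal F 2 n) (∏ i ∈ S, X i) := by
  rw [ee, map_prod]; rfl

lemma ee_empty : ee F n ∅ = 1 := by simp [ee]

lemma xv_sq (i : Fin n) : xv F 2 n i * xv F 2 n i = 0 := by
  have : xv F 2 n i * xv F 2 n i = Ideal.Quotient.mk (truncIdeal F 2 n) (X i ^ 2) := by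
    rw [xv, ← map_mul]; congr 1; ring
  rw [this, Ideal.Quotient.eq_zero_iff_mem]
  exact Ideal.subset_span ⟨i, rfl⟩

lemma ee_mul_ee (S T : Finset (Fin n)) :
    ee F n S * ee F n T = if Disjoint S T then ee F n (S ∪ T) else 0 := by
  split_ifs with h
  · rw [ee, ee, ee, ← Finset.prod_union h]
  · rw [Finset.not_disjoint_iff] at h
    obtain ⟨i, hiS, hiT⟩ := h
    rw [ee, ee, ← Finset.prod_erase_mul _ _ hiS, ← Finset.prod_erase_mul _ _ hiT]
    rw [mul_mul_mul_comm, mul_assoc, xv_sq, mul_zero, mul_zero]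

def alf (n : ℕ) (S : Finset (Fin n)) : Fin n →₀ ℕ := ∑ i ∈ S, Finsupp.single i 1

lemma alf_apply (S : Finset (Fin n)) (i : Fin n) :
    alf n S i = if i ∈ S then 1 else 0 := by
  classical
  rw [alf, Finset.sum_apply']
  simp [Finsupp.single_apply]

lemma alf_injective : Function.Injective (alf n) := by
  intro S T h
  ext i
  have := congrArg (fun f => f i) h
  simp only [alf_apply] at this
  by_cases hS : i ∈ S <;> by_cases hT : i ∈ T <;> simp_all

lemma prod_X_eq_monomial (S : Finset (Fin n)) :
    (∏ i ∈ S, X i : MvPolynomial (Fin n) F) = monomial (alf n S) 1 := by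
  classical
  induction S using Finset.induction_on with
  | empty => simp [alf]
  | @insert a S ha ih =>
      rw [Finset.prod_insert ha, ih, X, monomial_mul, mul_one]
      congr 1
      rw [alf, alf, Finset.sum_insert ha]

lemma smul_mk (a : F) (f : MvPolynomial (Fin n) F) :
    a • (Ideal.Quotient.mk (truncIdeal F 2 n) f)
      = Ideal.Quotient.mk (truncIdeal F 2 n) (C a * f) := by
  rw [← smul_eq_C_mul]
  rfl

lemma indep (c : Finset (Fin n) → F)
    (h : ∑ S : Finset (Fin n), c S • ee F n S = 0) : ∀ S, c S = 0 := by
  classical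
  have hq : Ideal.Quotient.mk (truncIdeal F 2 n)
      (∑ S : Finset (Fin n), C (c S) * ∏ i ∈ S, X i) = 0 := by
    rw [map_sum, ← h]
    exact Finset.sum_congr rfl fun S _ => by rw [ee_eq_mk, smul_mk]
  rw [mk_eq_zero_iff] at hq
  intro S
  by_contra hc
  have hcoeff : coeff (alf n S) (∑ T : Finset (Fin n), C (c T) * ∏ i ∈ T, X i) = c S := by
    rw [coeff_sum]
    rw [Finset.sum_eq_single S]
    · rw [coeff_C_mul, prod_X_eq_monomial, coeff_monomial, if_pos rfl, mul_one]
    · intro T _ hT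
      rw [coeff_C_mul, prod_X_eq_monomial, coeff_monomial,
        if_neg (fun he => hT (alf_injective he)), mul_zero]
    · intro hS; exact absurd (Finset.mem_univ S) hS
  have hmem : alf n S ∈ (∑ T : Finset (Fin n), C (c T) * ∏ i ∈ T, X i).support := by
    rw [mem_support_iff, hcoeff]; exact hc
  obtain ⟨i, hi⟩ := hq _ hmem
  rw [alf_apply] at hi
  split_ifs at hi <;> omega


lemma span_ee_top : Submodule.span F (Set.range (ee F n)) = ⊤ := by
  classical
  rw [Submodule.eq_top_iff']
  intro a
  obtain ⟨f, rfl⟩ := Ideal.Quotient.mk_surjective a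
  induction f using MvPolynomial.induction_on' with
  | add p q hp hq => rw [map_add]; exact Submodule.add_mem _ hp hq
  | monomial u a =>
      by_cases h : ∀ i, u i ≤ 1
      · have hu : u = alf n u.support := by
          ext i
          rw [alf_apply]
          by_cases hi : i ∈ u.support
          · rw [if_pos hi]
            have := Finsupp.mem_support_iff.mp hi
            have := h i
            omega
          · rw [if_neg hi]
            exact Finsupp.notMem_support_iff.mp hi
        have : (monomial u) a = C a * ∏ i ∈ u.support, X i := by
          rw [prod_X_eq_monomial, ← hu, C_mul_monomial, mul_one]
        rw [this, ← smul_mk, ← ee_eq_mk]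
        exact Submodule.smul_mem _ _ (Submodule.subset_span ⟨u.support, rfl⟩)
      · push_neg at h
        obtain ⟨i, hi⟩ := h
        have : Ideal.Quotient.mk (truncIdeal F 2 n) ((monomial u) a) = 0 := by
          rw [mk_eq_zero_iff]
          intro m hm
          have := support_monomial_subset hm
          rw [Finset.mem_singleton] at this
          subst this
          exact ⟨i, by omega⟩
        rw [this]
        exact Submodule.zero_mem _

lemma exists_repr (a : TP F 2 n) : ∃ c : Finset (Fin n) → F,
    a = ∑ S : Finset (Fin n), c S • ee F n S := by
  have := span_ee_top (F := F) (n := n)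
  have ha : a ∈ Submodule.span F (Set.range (ee F n)) := this ▸ Submodule.mem_top
  obtain ⟨c, hc⟩ := Submodule.mem_span_range_iff_exists_fun F |>.mp ha
  exact ⟨c, hc.symm⟩

lemma derivation_ext (d₁ d₂ : Wn F 2 n) (h : ∀ j, d₁ (xv F 2 n j) = d₂ (xv F 2 n j)) :
    d₁ = d₂ := by
  apply Derivation.ext_of_adjoin_eq_top (R := F) (Set.range (xv F 2 n))
  · have : Set.range (xv F 2 n) = (Ideal.Quotient.mkₐ F (truncIdeal F 2 n)) ''
        (Set.range (X : Fin n → MvPolynomial (Fin n) F)) := by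
      rw [← Set.range_comp]; rfl
    rw [this, ← AlgHom.map_adjoin, MvPolynomial.adjoin_range_X, Algebra.map_top,
      AlgHom.range_eq_top]
    exact Ideal.Quotient.mk_surjective
  · rintro _ ⟨j, rfl⟩
    exact h j

lemma d_prod (d : Wn F 2 n) (S : Finset (Fin n)) :
    d (ee F n S) = ∑ i ∈ S, ee F n (S.erase i) * d (xv F 2 n i) := by
  classical
  induction S using Finset.induction_on with
  | empty => simp [ee_empty]
  | @insert a S ha ih =>
      rw [ee, Finset.prod_insert ha, Derivation.leibniz, smul_eq_mul, smul_eq_mul, ← ee, ih]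
      rw [Finset.sum_insert ha, Finset.erase_insert ha, Finset.mul_sum]
      rw [add_comm]
      congr 1
      apply Finset.sum_congr rfl
      intro i hi
      rw [← mul_assoc]
      congr 1
      rw [Finset.erase_insert_of_ne ((ne_of_mem_of_not_mem hi ha).symm), ee, ee,
        Finset.prod_insert (fun hc => ha (Finset.mem_of_mem_erase hc))]


lemma dsum_apply {ι : Type*} (s : Finset ι) (f : ι → Wn F 2 n) (a : TP F 2 n) :
    (∑ i ∈ s, f i) a = ∑ i ∈ s, f i a := by
  classical
  induction s using Finset.cons_induction with
  | empty => simp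
  | cons i s hi ih => rw [Finset.sum_cons, Derivation.add_apply, ih, Finset.sum_cons]

variable {D : Fin n → Wn F 2 n}

lemma scrD_coeff (m j : Fin n) :
    (∏ k : Fin n, if m ≤ k ∧ k < j then xv F 2 n k ^ (2 - 1) else 1) = ee F n (Finset.Ico m j) := by
  classical
  rw [← Finset.prod_filter, ee]
  apply Finset.prod_congr
  · ext k; simp [Finset.mem_Ico]
  · intro k _; exact pow_one _

lemma scrD_apply_xv (hD : IsCoordDer F 2 n D) (m j : Fin n) :
    scrD F 2 n D m (xv F 2 n j) = if m ≤ j then ee F n (Finset.Ico m j) else 0 := by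
  classical
  rw [scrD, dsum_apply]
  rw [Finset.sum_eq_single j]
  · rw [apply_ite (fun d : Wn F 2 n => d (xv F 2 n j)), Derivation.zero_apply,
      Derivation.smul_apply, hD j j, if_pos rfl, smul_eq_mul, mul_one, scrD_coeff]
  · intro b _ hb
    rw [apply_ite (fun d : Wn F 2 n => d (xv F 2 n j)), Derivation.zero_apply,
      Derivation.smul_apply, hD b j, if_neg hb, smul_zero, ite_self]
  · intro hj; exact absurd (Finset.mem_univ j) hj

lemma min'_eq {S : Finset (Fin n)} {j : Fin n} (hj : j ∈ S) (h : ∀ k ∈ S, j ≤ k)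
    (hS : S.Nonempty) : S.min' hS = j :=
  le_antisymm (Finset.min'_le S j hj) (Finset.le_min' _ _ _ h)

lemma scrD_apply_ee (hD : IsCoordDer F 2 n D) (m : Fin n) (S : Finset (Fin n)) :
    scrD F 2 n D m (ee F n S) =
      if h : (S.filter (fun k => m ≤ k)).Nonempty then
        ee F n (Finset.Ico m ((S.filter (fun k => m ≤ k)).min' h)
          ∪ S.erase ((S.filter (fun k => m ≤ k)).min' h))
      else 0 := by
  classical
  rw [d_prod]
  have hterm : ∀ i ∈ S, ee F n (S.erase i) * scrD F 2 n D m (xv F 2 n i)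
      = if m ≤ i then (if Disjoint (S.erase i) (Finset.Ico m i) then
          ee F n (S.erase i ∪ Finset.Ico m i) else 0) else 0 := by
    intro i _
    rw [scrD_apply_xv hD, mul_ite, mul_zero, ee_mul_ee]
  rw [Finset.sum_congr rfl hterm]
  split_ifs with h
  · set j := (S.filter (fun k => m ≤ k)).min' h with hjdef
    have hjS : j ∈ S.filter (fun k => m ≤ k) := Finset.min'_mem _ h
    rw [Finset.mem_filter] at hjS
    rw [Finset.sum_eq_single j]
    · rw [if_pos hjS.2]
      have hdisj : Disjoint (S.erase j) (Finset.Ico m j) := by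
        rw [Finset.disjoint_left]
        intro k hk hk2
        rw [Finset.mem_erase] at hk
        rw [Finset.mem_Ico] at hk2
        have : j ≤ k := Finset.min'_le _ _ (Finset.mem_filter.mpr ⟨hk.2, hk2.1⟩)
        exact absurd hk2.2 (not_lt.mpr this)
      rw [if_pos hdisj, Finset.union_comm]
    · intro b hb hbj
      by_cases hmb : m ≤ b
      · rw [if_pos hmb, if_neg]
        rw [Finset.not_disjoint_iff]
        refine ⟨j, Finset.mem_erase.mpr ⟨fun he => hbj he.symm, hjS.1⟩, ?_⟩
        rw [Finset.mem_Ico]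
        refine ⟨hjS.2, ?_⟩
        have : j ≤ b := Finset.min'_le _ _ (Finset.mem_filter.mpr ⟨hb, hmb⟩)
        exact lt_of_le_of_ne this (fun he => hbj he.symm)
      · rw [if_neg hmb]
    · intro hj; exact absurd hjS.1 hj
  · apply Finset.sum_eq_zero
    intro i hi
    rw [Finset.not_nonempty_iff_eq_empty, Finset.filter_eq_empty_iff] at h
    rw [if_neg (h hi)]


variable (hn0 : 0 < n)

def jmin (n : ℕ) (hn0 : 0 < n) (S : Finset (Fin n)) : Fin n :=
  if h : S.Nonempty then S.min' h else ⟨0, hn0⟩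

def sh (n : ℕ) (hn0 : 0 < n) (S : Finset (Fin n)) : Finset (Fin n) :=
  Finset.Ico ⟨0, hn0⟩ (jmin n hn0 S) ∪ S.erase (jmin n hn0 S)

lemma zero_le' (k : Fin n) : (⟨0, hn0⟩ : Fin n) ≤ k := by
  rw [Fin.le_def]; exact Nat.zero_le _

lemma jmin_mem {S : Finset (Fin n)} (h : S.Nonempty) : jmin n hn0 S ∈ S := by
  rw [jmin, dif_pos h]; exact Finset.min'_mem _ _

lemma jmin_le {S : Finset (Fin n)} (h : S.Nonempty) {k : Fin n} (hk : k ∈ S) :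
    jmin n hn0 S ≤ k := by
  rw [jmin, dif_pos h]; exact Finset.min'_le _ _ hk

lemma D0_apply_ee (hD : IsCoordDer F 2 n D) (S : Finset (Fin n)) :
    scrD F 2 n D ⟨0, hn0⟩ (ee F n S) =
      if S.Nonempty then ee F n (sh n hn0 S) else 0 := by
  classical
  rw [scrD_apply_ee hD]
  have hfil : S.filter (fun k => (⟨0, hn0⟩ : Fin n) ≤ k) = S :=
    Finset.filter_true_of_mem (fun k _ => zero_le' hn0 k)
  split_ifs with h1 h2 h2
  · rw [sh, jmin, dif_pos h2]
    have hmin : (S.filter (fun k => (⟨0, hn0⟩ : Fin n) ≤ k)).min' h1 = S.min' h2 := by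
      apply min'_eq
      · exact Finset.mem_filter.mpr ⟨Finset.min'_mem _ _, zero_le' hn0 _⟩
      · intro k hk; exact Finset.min'_le _ _ (Finset.mem_filter.mp hk).1
    rw [hmin]
  · rw [hfil] at h1; exact absurd h1 h2
  · rw [← hfil] at h2; exact absurd h2 h1
  · rfl

lemma mem_sh_of_lt {S : Finset (Fin n)} (hS : S.Nonempty) {k : Fin n}
    (hk : k < jmin n hn0 S) : k ∈ sh n hn0 S := by
  rw [sh, Finset.mem_union, Finset.mem_Ico]
  exact Or.inl ⟨zero_le' hn0 k, hk⟩

lemma jmin_not_mem_sh (S : Finset (Fin n)) : jmin n hn0 S ∉ sh n hn0 S := by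
  rw [sh, Finset.mem_union, Finset.mem_Ico, Finset.mem_erase]
  rintro (⟨_, h⟩ | ⟨h, _⟩)
  · exact absurd h (lt_irrefl _)
  · exact h rfl

lemma sh_recover {S : Finset (Fin n)} (hS : S.Nonempty) :
    S = insert (jmin n hn0 S) ((sh n hn0 S).filter (fun k => jmin n hn0 S < k)) := by
  classical
  ext k
  rw [Finset.mem_insert, Finset.mem_filter, sh, Finset.mem_union, Finset.mem_Ico,
    Finset.mem_erase]
  constructor
  · intro hk
    rcases eq_or_ne k (jmin n hn0 S) with he | hne
    · exact Or.inl he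
    · exact Or.inr ⟨Or.inr ⟨hne, hk⟩, lt_of_le_of_ne (jmin_le hn0 hS hk) (Ne.symm hne)⟩
  · rintro (he | ⟨(⟨_, hlt⟩ | ⟨_, hk⟩), hgt⟩)
    · exact he ▸ jmin_mem hn0 hS
    · exact absurd hlt (not_lt.mpr (le_of_lt hgt))
    · exact hk

lemma sh_inj {S T : Finset (Fin n)} (hS : S.Nonempty) (hT : T.Nonempty)
    (h : sh n hn0 S = sh n hn0 T) : S = T := by
  have hj : jmin n hn0 S = jmin n hn0 T := by
    by_contra hne
    rcases lt_or_gt_of_ne hne with hlt | hlt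
    · exact jmin_not_mem_sh hn0 S (h ▸ mem_sh_of_lt hn0 hT hlt)
    · exact jmin_not_mem_sh hn0 T (h ▸ mem_sh_of_lt hn0 hS hlt)
  rw [sh_recover hn0 hS, sh_recover hn0 hT, hj, h]

lemma ker_D0 (hD : IsCoordDer F 2 n D) (a : TP F 2 n)
    (ha : scrD F 2 n D ⟨0, hn0⟩ a = 0) : ∃ c : F, a = algebraMap F (TP F 2 n) c := by
  classical
  obtain ⟨c, rfl⟩ := exists_repr (F := F) (n := n) a
  have hda : ∑ S : Finset (Fin n), c S • (if S.Nonempty then ee F n (sh n hn0 S) else 0) = 0 := by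
    have h2 : scrD F 2 n D ⟨0, hn0⟩ (∑ S : Finset (Fin n), c S • ee F n S)
        = ∑ S : Finset (Fin n), c S • (if S.Nonempty then ee F n (sh n hn0 S) else 0) := by
      rw [map_sum]
      exact Finset.sum_congr rfl fun S _ => by rw [Derivation.map_smul, D0_apply_ee hn0 hD]
    rw [← h2]
    exact ha
  set d : Finset (Fin n) → F := fun T =>
    ∑ S : Finset (Fin n), if S.Nonempty ∧ sh n hn0 S = T then c S else 0 with hd
  have hdz : ∀ T, d T = 0 := by
    apply indep
    rw [← hda, hd]
    rw [Finset.sum_congr rfl (fun T (_ : T ∈ Finset.univ) => Finset.sum_smul)]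
    rw [Finset.sum_comm]
    apply Finset.sum_congr rfl
    intro S _
    by_cases hS : S.Nonempty
    · rw [if_pos hS]
      rw [Finset.sum_eq_single (sh n hn0 S)]
      · rw [if_pos ⟨hS, rfl⟩]
      · intro T _ hT; rw [if_neg (fun hp => hT hp.2.symm), zero_smul]
      · intro h; exact absurd (Finset.mem_univ _) h
    · rw [if_neg hS, smul_zero]
      apply Finset.sum_eq_zero
      intro T _
      rw [if_neg (fun hp => hS hp.1), zero_smul]
  have hc : ∀ S : Finset (Fin n), S.Nonempty → c S = 0 := by
    intro S₀ h₀
    have := hdz (sh n hn0 S₀)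
    rw [hd] at this
    beta_reduce at this
    rw [Finset.sum_eq_single S₀] at this
    · rwa [if_pos ⟨h₀, rfl⟩] at this
    · intro S _ hne
      rw [if_neg]
      rintro ⟨hSne, hsh⟩
      exact hne (sh_inj hn0 hSne h₀ hsh)
    · intro h; exact absurd (Finset.mem_univ _) h
  refine ⟨c ∅, ?_⟩
  rw [Finset.sum_eq_single ∅]
  · rw [ee_empty, Algebra.algebraMap_eq_smul_one]
  · intro S _ hne
    rw [hc S (Finset.nonempty_iff_ne_empty.mpr hne), zero_smul]
  · intro h; exact absurd (Finset.mem_univ _) h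


lemma scrD_apply_ee' (hD : IsCoordDer F 2 n D) (m : Fin n) (S : Finset (Fin n)) (j : Fin n)
    (hj : j ∈ S) (hmj : m ≤ j) (hmin : ∀ k ∈ S, m ≤ k → j ≤ k) :
    scrD F 2 n D m (ee F n S) = ee F n (Finset.Ico m j ∪ S.erase j) := by
  classical
  rw [scrD_apply_ee hD]
  have hne : (S.filter (fun k => m ≤ k)).Nonempty := ⟨j, Finset.mem_filter.mpr ⟨hj, hmj⟩⟩
  rw [dif_pos hne]
  have hm : (S.filter (fun k => m ≤ k)).min' hne = j := by
    apply min'_eq (Finset.mem_filter.mpr ⟨hj, hmj⟩)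
    intro k hk
    exact hmin k (Finset.mem_filter.mp hk).1 (Finset.mem_filter.mp hk).2
  rw [hm]

lemma scrD_apply_ee_zero (hD : IsCoordDer F 2 n D) (m : Fin n) (S : Finset (Fin n))
    (h : ∀ k ∈ S, ¬ m ≤ k) : scrD F 2 n D m (ee F n S) = 0 := by
  classical
  rw [scrD_apply_ee hD, dif_neg]
  rw [Finset.filter_eq_empty_iff.mpr h]
  exact Finset.not_nonempty_empty

lemma bracket_smul (d e : Wn F 2 n) (a : F) : ⁅d, a • e⁆ = a • ⁅d, e⁆ := by
  ext x
  simp only [Derivation.commutator_apply, Derivation.smul_apply, Derivation.map_smul, smul_sub]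

lemma bracket_add (d e f : Wn F 2 n) : ⁅d, e + f⁆ = ⁅d, e⁆ + ⁅d, f⁆ := by
  ext x
  simp only [Derivation.commutator_apply, Derivation.add_apply, map_add]
  abel

lemma bracket_zero (d : Wn F 2 n) : ⁅d, (0 : Wn F 2 n)⁆ = 0 := by
  ext x
  simp [Derivation.commutator_apply]

lemma comm (hD : IsCoordDer F 2 n D) (k : Fin n) :
    ⁅scrD F 2 n D ⟨0, hn0⟩, scrD F 2 n D k⁆ = 0 := by
  classical
  apply derivation_ext
  intro j
  rw [Derivation.zero_apply, Derivation.commutator_apply]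
  rw [scrD_apply_xv hD, scrD_apply_xv hD, if_pos (zero_le' hn0 j)]
  by_cases hkj : k ≤ j
  · rw [if_pos hkj]
    rcases eq_or_lt_of_le hkj with rfl | hlt
    · rw [Finset.Ico_self, ee_empty, Derivation.map_one_eq_zero,
        scrD_apply_ee_zero hD, sub_zero]
      intro m hm
      rw [Finset.mem_Ico] at hm
      exact not_le.mpr hm.2
    · have h1 : scrD F 2 n D ⟨0, hn0⟩ (ee F n (Finset.Ico k j))
          = ee F n (Finset.Ico ⟨0, hn0⟩ k ∪ (Finset.Ico k j).erase k) := by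
        apply scrD_apply_ee' hD _ _ k (Finset.mem_Ico.mpr ⟨le_refl k, hlt⟩) (zero_le' hn0 k)
        intro m hm _
        exact (Finset.mem_Ico.mp hm).1
      have h2 : scrD F 2 n D k (ee F n (Finset.Ico ⟨0, hn0⟩ j))
          = ee F n (Finset.Ico k k ∪ (Finset.Ico ⟨0, hn0⟩ j).erase k) := by
        apply scrD_apply_ee' hD _ _ k (Finset.mem_Ico.mpr ⟨zero_le' hn0 k, hlt⟩) (le_refl k)
        intro m _ hm
        exact hm
      rw [h1, h2, Finset.Ico_self, Finset.empty_union]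
      have : Finset.Ico ⟨0, hn0⟩ k ∪ (Finset.Ico k j).erase k
          = (Finset.Ico ⟨0, hn0⟩ j).erase k := by
        ext m
        simp only [Finset.mem_union, Finset.mem_Ico, Finset.mem_erase, Fin.lt_def, Fin.le_def,
          Fin.ext_iff]
        have hkj' : (k : ℕ) < (j : ℕ) := hlt
        omega
      rw [this, sub_self]
  · rw [if_neg hkj, map_zero, zero_sub, neg_eq_zero]
    apply scrD_apply_ee_zero hD
    intro m hm
    rw [Finset.mem_Ico] at hm
    intro hle
    exact hkj (le_trans hle (le_of_lt hm.2))

end Cent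
end

open Cent

/-- For `p = 2` and `n ≥ 2`, the centralizer of `𝒟₁` in `W_n` is the span of
`𝒟₁, …, 𝒟ₙ`. -/
theorem centralizer_scrD_one (F : Type*) [Field F] [CharP F 2] (n : ℕ)
    (hn : 2 ≤ n) (D : Fin n → Wn F 2 n) (hD : IsCoordDer F 2 n D) :
    {y : Wn F 2 n | ⁅scrD F 2 n D ⟨0, Nat.lt_of_lt_of_le Nat.zero_lt_two hn⟩, y⁆ = 0} =
      (Submodule.span F (Set.range (scrD F 2 n D)) : Submodule F (Wn F 2 n)) := by
  classical
  have hn0 : 0 < n := Nat.lt_of_lt_of_le Nat.zero_lt_two hn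
  ext y
  simp only [Set.mem_setOf_eq, SetLike.mem_coe]
  constructor
  · intro hy
    have hcom : ∀ a, scrD F 2 n D ⟨0, hn0⟩ (y a) = y (scrD F 2 n D ⟨0, hn0⟩ a) := by
      intro a
      have h0 : (⁅scrD F 2 n D ⟨0, hn0⟩, y⁆) a = 0 := by rw [hy]; rfl
      rw [Derivation.commutator_apply] at h0
      exact sub_eq_zero.mp h0
    have key : ∀ i : ℕ, i ≤ n → ∃ c : Fin n → F,
        ∀ j : Fin n, (j : ℕ) < i →
          y (xv F 2 n j) = (∑ k : Fin n, c k • scrD F 2 n D k) (xv F 2 n j) := by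
      intro i
      induction i with
      | zero => exact fun _ => ⟨0, fun j hj => absurd hj (Nat.not_lt_zero _)⟩
      | succ i ih =>
        intro hi1
        obtain ⟨c, hc⟩ := ih (Nat.le_of_succ_le hi1)
        set z := ∑ k : Fin n, c k • scrD F 2 n D k with hzdef
        have hii : i < n := hi1
        set ii : Fin n := ⟨i, hii⟩ with hiidef
        have hzc : ⁅scrD F 2 n D ⟨0, hn0⟩, z⁆ = 0 := by
          rw [hzdef]
          induction (Finset.univ : Finset (Fin n)) using Finset.cons_induction with
          | empty => simp [bracket_zero]
          | cons k s hk ihs =>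
              rw [Finset.sum_cons, bracket_add, ihs, add_zero, bracket_smul, comm hn0 hD k, smul_zero]
        have hzcom : ∀ a, scrD F 2 n D ⟨0, hn0⟩ (z a) = z (scrD F 2 n D ⟨0, hn0⟩ a) := by
          intro a
          have h0 : (⁅scrD F 2 n D ⟨0, hn0⟩, z⁆) a = 0 := by rw [hzc]; rfl
          rw [Derivation.commutator_apply] at h0
          exact sub_eq_zero.mp h0
        have hb : scrD F 2 n D ⟨0, hn0⟩ (y (xv F 2 n ii) - z (xv F 2 n ii)) = 0 := by
          rw [map_sub, hcom, hzcom, scrD_apply_xv hD, if_pos (zero_le' hn0 ii)]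
          rw [sub_eq_zero, d_prod, d_prod]
          apply Finset.sum_congr rfl
          intro m hm
          rw [hc m (Finset.mem_Ico.mp hm).2]
        obtain ⟨c', hc'⟩ := ker_D0 hn0 hD _ hb
        refine ⟨fun k => if k = ii then c k + c' else c k, ?_⟩
        have hz' : (∑ k : Fin n, (if k = ii then c k + c' else c k) • scrD F 2 n D k)
            = z + c' • scrD F 2 n D ii := by
          have hterm : ∀ k : Fin n, (if k = ii then c k + c' else c k) • scrD F 2 n D k
              = c k • scrD F 2 n D k + (if k = ii then c' • scrD F 2 n D ii else 0) := by
            intro k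
            by_cases hk : k = ii
            · subst hk; rw [if_pos rfl, if_pos rfl, add_smul]
            · rw [if_neg hk, if_neg hk, add_zero]
          rw [Finset.sum_congr rfl (fun k _ => hterm k), Finset.sum_add_distrib,
            Finset.sum_ite_eq' Finset.univ ii, if_pos (Finset.mem_univ ii), hzdef]
        intro j hj
        rw [hz', Derivation.add_apply, Derivation.smul_apply, scrD_apply_xv hD]
        rcases Nat.lt_or_ge (j : ℕ) i with hji | hji
        · rw [hc j hji, if_neg, smul_zero, add_zero]
          intro hle
          have h3 : i ≤ (j : ℕ) := Fin.le_def.mp hle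
          omega
        · have hje : j = ii := by
            apply Fin.ext
            simp only [hiidef]
            omega
          rw [hje]
          rw [if_pos (le_refl ii), Finset.Ico_self, ee_empty]
          rw [← Algebra.algebraMap_eq_smul_one]
          rw [sub_eq_iff_eq_add] at hc'
          rw [hc', add_comm]
    obtain ⟨c, hc⟩ := key n (le_refl n)
    have hy2 : y = ∑ k : Fin n, c k • scrD F 2 n D k :=
      derivation_ext _ _ (fun j => hc j j.isLt)
    rw [hy2]
    exact Submodule.sum_mem _
      (fun k _ => Submodule.smul_mem _ _ (Submodule.subset_span ⟨k, rfl⟩))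
  · intro hy
    induction hy using Submodule.span_induction with
    | mem x hx =>
        obtain ⟨k, rfl⟩ := hx
        exact comm hn0 hD k
    | zero => exact bracket_zero _
    | add a b _ _ ha hb => rw [bracket_add, ha, hb, add_zero]
    | smul r a _ ha => rw [bracket_smul, ha, smul_zero]
end

section
/- Let F be a field of characteristic p > 2, W_n the Jacobson-Witt algebra, ν = (1,...,1), and d_ν^{((p+1)/2)} = Σ_{i=1}^n x_i^{(p+1)/2} D_i. If X = Σ_k X_k ∈ W_n (graded decomposition) satisfies [X, d_ν^{((p+1)/2)}] = 0, then X_k = 0 for all k < (p−1)/2. -/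
open MvPolynomial

set_option synthInstance.maxHeartbeats 400000
set_option maxHeartbeats 1000000

noncomputable section

namespace Aux

variable {F : Type*} [Field F] {p n : ℕ}

/-- coefficients of elements of the truncation ideal vanish on reduced exponents -/
theorem coeff_mem_truncIdeal {f : MvPolynomial (Fin n) F}
    (hf : f ∈ truncIdeal F p n) {β : Fin n →₀ ℕ} (hβ : ∀ i, β i < p) :
    coeff β f = 0 := by
  have main : ∀ β : Fin n →₀ ℕ, (∀ i, β i < p) → coeff β f = 0 := by
    refine Submodule.span_induction (p := fun x _ => ∀ β : Fin n →₀ ℕ,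
      (∀ i, β i < p) → coeff β x = 0) ?_ ?_ ?_ ?_ hf
    · rintro x ⟨i, rfl⟩ β hβ
      rw [coeff_X_pow]
      have : Finsupp.single i p ≠ β := by
        intro h
        have h2 := hβ i
        rw [← h, Finsupp.single_eq_same] at h2
        omega
      simp [this]
    · intro β hβ; simp
    · intro x y _ _ hx hy β hβ
      simp [coeff_add, hx β hβ, hy β hβ]
    · intro r x _ hx β hβ
      rw [smul_eq_mul, coeff_mul]
      refine Finset.sum_eq_zero fun uv huv => ?_
      rw [Finset.HasAntidiagonal.mem_antidiagonal] at huv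
      have hz : coeff uv.2 x = 0 := by
        apply hx
        intro i
        have h2 : uv.2 i ≤ β i := by
          have := DFunLike.congr_fun huv i
          simp only [Finsupp.add_apply] at this
          omega
        exact lt_of_le_of_lt h2 (hβ i)
      simp [hz]
  exact main β hβ

theorem mem_truncIdeal_of_support {f : MvPolynomial (Fin n) F}
    (h : ∀ β ∈ f.support, ∃ i, p ≤ β i) : f ∈ truncIdeal F p n := by
  rw [f.as_sum]
  refine Ideal.sum_mem _ fun β hβ => ?_
  obtain ⟨i, hi⟩ := h β hβ
  have hmono : (monomial β) (coeff β f) =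
      (monomial (β - Finsupp.single i p)) (coeff β f) * X i ^ p := by
    rw [X_pow_eq_monomial, monomial_mul, mul_one, tsub_add_cancel_of_le]
    exact Finsupp.single_le_iff.mpr hi
  rw [hmono]
  exact Ideal.mul_mem_left _ _ (Ideal.subset_span ⟨i, rfl⟩)

theorem red_eq_zero {f : MvPolynomial (Fin n) F}
    (hred : ∀ β ∈ f.support, ∀ i, β i < p)
    (h : Ideal.Quotient.mk (truncIdeal F p n) f = 0) : f = 0 := by
  rw [Ideal.Quotient.eq_zero_iff_mem] at h
  rw [eq_zero_iff]
  intro β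
  by_cases hβ : β ∈ f.support
  · exact coeff_mem_truncIdeal h (hred β hβ)
  · simpa using hβ

theorem coeff_pderiv (i : Fin n) (f : MvPolynomial (Fin n) F) (δ : Fin n →₀ ℕ) :
    coeff δ (pderiv i f) = coeff (δ + Finsupp.single i 1) f * ((δ i + 1 : ℕ) : F) := by
  induction f using MvPolynomial.induction_on' with
  | monomial β a =>
      rw [pderiv_monomial, coeff_monomial, coeff_monomial]
      by_cases hb : β i = 0
      · have h2 : β ≠ δ + Finsupp.single i 1 := by
          intro h
          apply absurd (DFunLike.congr_fun h i)
          simp [hb]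
        simp [h2, hb]
      · have hiff : (β - Finsupp.single i 1 = δ) ↔ (β = δ + Finsupp.single i 1) := by
          constructor
          · intro h; rw [← h, tsub_add_cancel_of_le]
            exact Finsupp.single_le_iff.mpr (by omega)
          · intro h; rw [h]; simp
        simp only [hiff]
        split_ifs with h
        · subst h
          simp [mul_comm]
        · simp
  | add f g hf hg => simp [map_add, coeff_add, hf, hg, add_mul]

/-- the coordinate derivations act as `pderiv` on the quotient -/
theorem D_mk (D : Fin n → Wn F p n) (hD : IsCoordDer F p n D) (i : Fin n)
    (f : MvPolynomial (Fin n) F) :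
    D i (Ideal.Quotient.mk (truncIdeal F p n) f) =
      Ideal.Quotient.mk (truncIdeal F p n) (pderiv i f) := by
  induction f using MvPolynomial.induction_on with
  | C a =>
      have h1 : (Ideal.Quotient.mk (truncIdeal F p n)) (C a) = algebraMap F (TP F p n) a := rfl
      rw [h1, Derivation.map_algebraMap, pderiv_C, map_zero]
  | add f g hf hg => rw [map_add, map_add, hf, hg, map_add, map_add]
  | mul_X f j hf =>
      have hmul : (Ideal.Quotient.mk (truncIdeal F p n)) (f * X j) =
          (Ideal.Quotient.mk (truncIdeal F p n)) f * xv F p n j := rfl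
      rw [hmul, Derivation.leibniz, hf, hD i j, pderiv_mul, map_add]
      rcases eq_or_ne i j with rfl | hij
      · rw [if_pos rfl, pderiv_X_self, mul_one, smul_eq_mul, mul_one, smul_eq_mul, map_mul]
        have h1 : (Ideal.Quotient.mk (truncIdeal F p n)) (X i) = xv F p n i := rfl
        rw [h1]; ring
      · rw [if_neg hij, pderiv_X_of_ne (Ne.symm hij), mul_zero, map_zero, add_zero,
          smul_eq_mul, mul_zero, zero_add, smul_eq_mul, map_mul]
        rw [mul_comm]
        rfl


theorem mk_smul (c : F) (f : MvPolynomial (Fin n) F) :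
    Ideal.Quotient.mk (truncIdeal F p n) (c • f) =
      c • Ideal.Quotient.mk (truncIdeal F p n) f := by
  rw [← Ideal.Quotient.mkₐ_eq_mk F, map_smul]

def Hgr (F : Type*) [Field F] (p n m : ℕ) : Submodule F (TP F p n) :=
  Submodule.span F {x | ∃ β : Fin n →₀ ℕ, (∀ i, β i < p) ∧ (∑ i, β i) = m ∧
    x = Ideal.Quotient.mk (truncIdeal F p n) (monomial β 1)}

theorem mk_mem_Hgr {f : MvPolynomial (Fin n) F} {m : ℕ}
    (hf : ∀ β ∈ f.support, (∑ i, β i) = m) :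
    Ideal.Quotient.mk (truncIdeal F p n) f ∈ Hgr F p n m := by
  rw [f.as_sum, map_sum]
  refine Submodule.sum_mem _ fun β hβ => ?_
  by_cases hred : ∀ i, β i < p
  · have h1 : (monomial β) (coeff β f) = coeff β f • monomial β (1 : F) := by
      rw [smul_monomial, smul_eq_mul, mul_one]
    rw [h1, mk_smul]
    exact Submodule.smul_mem _ _ (Submodule.subset_span ⟨β, hred, hf β hβ, rfl⟩)
  · have h0 : Ideal.Quotient.mk (truncIdeal F p n) ((monomial β) (coeff β f)) = 0 := by
      rw [Ideal.Quotient.eq_zero_iff_mem]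
      refine mem_truncIdeal_of_support fun γ hγ => ?_
      push_neg at hred
      obtain ⟨i, hi⟩ := hred
      have : γ = β := by
        have := support_monomial_subset hγ
        simpa using this
      exact ⟨i, this ▸ hi⟩
    rw [h0]
    exact Submodule.zero_mem _

def evalD (F : Type*) [Field F] (p n : ℕ) (k : Fin n) : Wn F p n →ₗ[F] TP F p n where
  toFun w := w (xv F p n k)
  map_add' a b := by simp
  map_smul' c a := by simp

theorem xm_eq (α : Fin n → ℕ) : xm F p n α =
    Ideal.Quotient.mk (truncIdeal F p n)
      (monomial (Finsupp.equivFunOnFinite.symm α) (1 : F)) := by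
  rw [xm]
  congr 1
  rw [monomial_eq, C_1, one_mul, Finsupp.prod_fintype]
  · simp
  · intro i; exact pow_zero _

theorem val_mem_Hgr {D : Fin n → Wn F p n} (hD : IsCoordDer F p n D) (hp0 : 0 < p)
    {m : ℕ} {w : Wn F p n} (hw : w ∈ gradeW F p n D m) (k : Fin n) :
    w (xv F p n k) ∈ Hgr F p n m := by
  have hle : gradeW F p n D m ≤ (Hgr F p n m).comap (evalD F p n k) := by
    refine Submodule.span_le.mpr ?_
    rintro w ⟨α, j, hα, hs, rfl⟩
    simp only [SetLike.mem_coe, Submodule.mem_comap]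
    have hev : evalD F p n k (xm F p n α • D j) =
        xm F p n α * (if j = k then 1 else 0) := by
      show (xm F p n α • D j) (xv F p n k) = _
      rw [Derivation.smul_apply, hD j k, smul_eq_mul]
    rw [hev]
    rcases eq_or_ne j k with rfl | hjk
    · rw [if_pos rfl, mul_one, xm_eq]
      refine Submodule.subset_span ⟨Finsupp.equivFunOnFinite.symm α, ?_, ?_, rfl⟩
      · intro i
        simp only [Finsupp.coe_equivFunOnFinite_symm]
        have := hα i
        omega
      · rw [← hs]
        simp
    · rw [if_neg hjk, mul_zero]
      exact Submodule.zero_mem _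
  exact hle hw

theorem eq_zero_of_vanish (w : Wn F p n) (h : ∀ k, w (xv F p n k) = 0) : w = 0 := by
  have hadj : Algebra.adjoin F (Set.range (xv F p n)) = ⊤ := by
    have himg : Set.range (xv F p n) =
        ⇑(Ideal.Quotient.mkₐ F (truncIdeal F p n)) '' Set.range X := by
      rw [← Set.range_comp]; rfl
    rw [himg, ← AlgHom.map_adjoin, MvPolynomial.adjoin_range_X, Algebra.map_top]
    exact (AlgHom.range_eq_top _).mpr (Ideal.Quotient.mkₐ_surjective F _)
  refine Derivation.ext_of_adjoin_eq_top _ hadj ?_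
  rintro x ⟨k, rfl⟩
  simp [h k]

theorem exists_red_homog {x : TP F p n} {m : ℕ} (hx : x ∈ Hgr F p n m) :
    ∃ g : MvPolynomial (Fin n) F,
      (∀ β ∈ g.support, (∀ i, β i < p) ∧ (∑ i, β i) = m) ∧
      Ideal.Quotient.mk (truncIdeal F p n) g = x := by
  refine Submodule.span_induction ?_ ?_ ?_ ?_ hx
  · rintro x ⟨β, hred, hdeg, rfl⟩
    refine ⟨monomial β 1, fun γ hγ => ?_, rfl⟩
    have : γ = β := by
      have := support_monomial_subset hγ
      simpa using this
    subst this
    exact ⟨hred, hdeg⟩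
  · exact ⟨0, by simp, map_zero _⟩
  · rintro x y _ _ ⟨g1, hg1, rfl⟩ ⟨g2, hg2, rfl⟩
    refine ⟨g1 + g2, fun β hβ => ?_, map_add _ _ _⟩
    rcases Finset.mem_union.mp (MvPolynomial.support_add hβ) with h | h
    · exact hg1 β h
    · exact hg2 β h
  · rintro c x _ ⟨g, hg, rfl⟩
    exact ⟨c • g, fun β hβ => hg β (MvPolynomial.support_smul hβ), mk_smul c g⟩

theorem indep_Hgr (u : ℕ → TP F p n) (t : Finset ℕ)
    (hu : ∀ j ∈ t, u j ∈ Hgr F p n j) (h0 : ∑ j ∈ t, u j = 0) :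
    ∀ j ∈ t, u j = 0 := by
  have hrep : ∀ j : {x // x ∈ t}, ∃ g : MvPolynomial (Fin n) F,
      (∀ β ∈ g.support, (∀ i, β i < p) ∧ (∑ i, β i) = (j : ℕ)) ∧
      Ideal.Quotient.mk (truncIdeal F p n) g = u j := fun j =>
    exists_red_homog (hu j j.2)
  choose g hg hmk using hrep
  classical
  have hmkG : Ideal.Quotient.mk (truncIdeal F p n) (∑ j ∈ t.attach, g j) = 0 := by
    rw [map_sum]
    have : ∀ j ∈ t.attach, Ideal.Quotient.mk (truncIdeal F p n) (g j) = u (j : ℕ) :=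
      fun j _ => hmk j
    rw [Finset.sum_congr rfl this, Finset.sum_attach t u, h0]
  have hG : (∑ j ∈ t.attach, g j) = 0 := by
    refine red_eq_zero (p := p) ?_ hmkG
    intro β hβ i
    obtain ⟨j, -, hj⟩ := Finset.mem_biUnion.mp (MvPolynomial.support_sum hβ)
    exact ((hg j β hj).1) i
  intro j0 hj0
  rw [← hmk ⟨j0, hj0⟩]
  have hgz : g ⟨j0, hj0⟩ = 0 := by
    rw [eq_zero_iff]
    intro β
    by_cases hc : coeff β (g ⟨j0, hj0⟩) = 0
    · exact hc
    · exfalso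
      have hβ : β ∈ (g ⟨j0, hj0⟩).support := mem_support_iff.mpr hc
      have hdeg : (∑ i, β i) = j0 := (hg ⟨j0, hj0⟩ β hβ).2
      have hsum : coeff β (∑ j ∈ t.attach, g j) = 0 := by rw [hG]; simp
      rw [coeff_sum] at hsum
      rw [Finset.sum_eq_single_of_mem ⟨j0, hj0⟩ (Finset.mem_attach _ _) ?_] at hsum
      · exact hc hsum
      · intro b _ hb
        by_contra hcb
        have hβb : β ∈ (g b).support := mem_support_iff.mpr hcb
        have : (∑ i, β i) = (b : ℕ) := (hg b β hβb).2
        exact hb (Subtype.ext (by rw [← this, hdeg]))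
  rw [hgz, map_zero]

def Phi (q : ℕ) (k : Fin n) (g : MvPolynomial (Fin n) F) : MvPolynomial (Fin n) F :=
  q • ((X k) ^ (q - 1) * g) - ∑ i, (X i) ^ q * pderiv i g

theorem coeff_Xpow_mul (s : Fin n) (e : ℕ) (f : MvPolynomial (Fin n) F) (γ : Fin n →₀ ℕ) :
    coeff γ (X s ^ e * f) =
      if Finsupp.single s e ≤ γ then coeff (γ - Finsupp.single s e) f else 0 := by
  rw [X_pow_eq_monomial, coeff_monomial_mul']
  split_ifs <;> simp

theorem sum_single_apply (k : Fin n) (c : ℕ) :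
    ∑ j, (Finsupp.single k c : Fin n →₀ ℕ) j = c := by
  simp [Finsupp.single_apply]

theorem sum_add_apply (a b : Fin n →₀ ℕ) : ∑ j, (a + b : Fin n →₀ ℕ) j = (∑ j, a j) + ∑ j, b j := by
  simp [Finset.sum_add_distrib]

theorem Phi_support {q : ℕ} {g : MvPolynomial (Fin n) F} {k : Fin n} :
    ∀ γ ∈ (Phi q k g).support,
      (∃ β ∈ g.support, γ = β + Finsupp.single k (q - 1)) ∨
      (∃ β ∈ g.support, ∃ i, 1 ≤ β i ∧ γ = (β - Finsupp.single i 1) + Finsupp.single i q) := by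
  intro γ hγ
  rw [mem_support_iff] at hγ
  have hcases : coeff γ (q • ((X k) ^ (q - 1) * g)) ≠ 0 ∨
      coeff γ (∑ i, (X i) ^ q * pderiv i g) ≠ 0 := by
    by_contra hcon
    push_neg at hcon
    apply hγ
    unfold Phi
    rw [coeff_sub, hcon.1, hcon.2, sub_zero]
  rcases hcases with h | h
  · left
    rw [MvPolynomial.coeff_smul] at h
    have h2 : coeff γ (X k ^ (q - 1) * g) ≠ 0 := by
      intro h3; rw [h3] at h; simp at h
    rw [coeff_Xpow_mul] at h2
    split_ifs at h2 with hle
    · refine ⟨γ - Finsupp.single k (q - 1), mem_support_iff.mpr h2, ?_⟩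
      rw [tsub_add_cancel_of_le hle]
    · simp at h2
  · right
    rw [coeff_sum] at h
    obtain ⟨i, -, hi⟩ := Finset.exists_ne_zero_of_sum_ne_zero h
    rw [coeff_Xpow_mul] at hi
    split_ifs at hi with hle
    · rw [coeff_pderiv] at hi
      have h2 : coeff (γ - Finsupp.single i q + Finsupp.single i 1) g ≠ 0 := by
        intro h3; rw [h3] at hi; simp at hi
      refine ⟨γ - Finsupp.single i q + Finsupp.single i 1, mem_support_iff.mpr h2, i, ?_, ?_⟩
      · simp
      · have h4 : γ - Finsupp.single i q + Finsupp.single i 1 - Finsupp.single i 1 =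
            γ - Finsupp.single i q := by simp
        rw [h4, tsub_add_cancel_of_le hle]
    · simp at hi

theorem Phi_deg {q m : ℕ} (hq1 : 1 ≤ q) {g : MvPolynomial (Fin n) F}
    (hg : ∀ β ∈ g.support, (∑ i, β i) = m) (k : Fin n) :
    ∀ γ ∈ (Phi q k g).support, (∑ i, γ i) = m + (q - 1) := by
  intro γ hγ
  rcases Phi_support γ hγ with ⟨β, hβ, rfl⟩ | ⟨β, hβ, i, hi1, rfl⟩
  · rw [sum_add_apply, hg β hβ, sum_single_apply]
  · have hc : (β - Finsupp.single i 1) + Finsupp.single i 1 = β :=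
      tsub_add_cancel_of_le (Finsupp.single_le_iff.mpr hi1)
    have hsplit : (∑ j, (β - Finsupp.single i 1 : Fin n →₀ ℕ) j) + 1 = m := by
      have := congrArg (fun x : Fin n →₀ ℕ => ∑ j, x j) hc
      simp only [sum_add_apply, sum_single_apply] at this
      rw [this, hg β hβ]
    rw [sum_add_apply, sum_single_apply]
    omega

theorem Phi_red {q m : ℕ} {p : ℕ} (h2q : 2 * q = p + 1) (hmq : m < q)
    {g : MvPolynomial (Fin n) F}
    (hg : ∀ β ∈ g.support, (∑ i, β i) = m) (k : Fin n) :
    ∀ γ ∈ (Phi q k g).support, ∀ l, γ l < p := by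
  intro γ hγ l
  rcases Phi_support γ hγ with ⟨β, hβ, rfl⟩ | ⟨β, hβ, i, hi1, rfl⟩
  · have hβl : β l ≤ m := by
      rw [← hg β hβ]
      exact Finset.single_le_sum (fun i _ => Nat.zero_le _) (Finset.mem_univ l)
    have h1 : (β + Finsupp.single k (q - 1) : Fin n →₀ ℕ) l = β l + (if k = l then q - 1 else 0) := by
      rw [Finsupp.add_apply, Finsupp.single_apply]
    rw [h1]
    split_ifs <;> omega
  · have hβl : β l ≤ m := by
      rw [← hg β hβ]
      exact Finset.single_le_sum (fun i _ => Nat.zero_le _) (Finset.mem_univ l)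
    have hβi : β i ≤ m := by
      rw [← hg β hβ]
      exact Finset.single_le_sum (fun i _ => Nat.zero_le _) (Finset.mem_univ i)
    have h1 : ((β - Finsupp.single i 1) + Finsupp.single i q : Fin n →₀ ℕ) l =
        (β l - (if i = l then 1 else 0)) + (if i = l then q else 0) := by
      rw [Finsupp.add_apply, Finsupp.tsub_apply, Finsupp.single_apply, Finsupp.single_apply]
    rw [h1]
    split_ifs with h
    · subst h; omega
    · omega

theorem core {q m : ℕ} (hq1 : 1 ≤ q) (hqp : q < p) (hmq : m < q) [CharP F p] (hp : p.Prime)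
    {g : MvPolynomial (Fin n) F}
    (hg : ∀ β ∈ g.support, (∑ i, β i) = m) (k : Fin n) (hP : Phi q k g = 0) : g = 0 := by
  rw [eq_zero_iff]
  intro β
  by_cases hβ : β ∈ g.support
  swap
  · simpa using hβ
  have hβk : β k ≤ m := by
    rw [← hg β hβ]
    exact Finset.single_le_sum (fun i _ => Nat.zero_le _) (Finset.mem_univ k)
  have hβj : ∀ j, β j ≤ m := by
    intro j
    rw [← hg β hβ]
    exact Finset.single_le_sum (fun i _ => Nat.zero_le _) (Finset.mem_univ j)
  set γ : Fin n →₀ ℕ := Finsupp.single k (q - 1) + β with hγdef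
  have h0 : coeff γ (Phi q k g) = 0 := by rw [hP]; simp
  unfold Phi at h0
  rw [coeff_sub, sub_eq_zero, MvPolynomial.coeff_smul] at h0
  have hγk : γ k = (q - 1) + β k := by
    rw [hγdef, Finsupp.add_apply, Finsupp.single_eq_same]
  have hL : coeff γ (X k ^ (q - 1) * g) = coeff β g := by
    rw [X_pow_eq_monomial, hγdef, coeff_monomial_mul, one_mul]
  have hR : coeff γ (∑ i, X i ^ q * pderiv i g) = (β k : F) * coeff β g := by
    rw [coeff_sum]
    rw [Finset.sum_eq_single_of_mem k (Finset.mem_univ k) ?side]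
    case side =>
      intro i _ hik
      rw [coeff_Xpow_mul, if_neg]
      intro hle
      have h1 : q ≤ γ i := by
        have := Finsupp.single_le_iff.mp hle
        exact this
      have h2 : γ i = β i := by
        rw [hγdef, Finsupp.add_apply, Finsupp.single_apply, if_neg (Ne.symm hik), zero_add]
      have := hβj i
      omega
    rw [coeff_Xpow_mul]
    by_cases hbk : 1 ≤ β k
    · rw [if_pos (Finsupp.single_le_iff.mpr (by omega))]
      rw [coeff_pderiv]
      have hδ : γ - Finsupp.single k q + Finsupp.single k 1 = β := by
        ext j
        rcases eq_or_ne j k with rfl | hj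
        · simp only [Finsupp.add_apply, Finsupp.tsub_apply, Finsupp.single_eq_same, hγk]
          omega
        · simp only [Finsupp.add_apply, Finsupp.tsub_apply,
            Finsupp.single_apply, if_neg (Ne.symm hj), add_zero, tsub_zero, hγdef]
          simp [Finsupp.single_apply, Ne.symm hj]
    
      have hδk : (γ - Finsupp.single k q) k = β k - 1 := by
        rw [Finsupp.tsub_apply, Finsupp.single_eq_same, hγk]
        omega
      rw [hδ, hδk]
      have hcast : ((β k - 1 + 1 : ℕ) : F) = (β k : F) := by
        congr 1
        omega
      rw [hcast, mul_comm]
    · rw [if_neg]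
      · have : β k = 0 := by omega
        rw [this]
        simp
      · intro hle
        have h1 : q ≤ γ k := Finsupp.single_le_iff.mp hle
        omega
  rw [hL, hR, nsmul_eq_mul] at h0
  have hsub : ((q - β k : ℕ) : F) * coeff β g = 0 := by
    rw [Nat.cast_sub (by omega), sub_mul, h0, sub_self]
  have hne : ((q - β k : ℕ) : F) ≠ 0 := by
    intro h
    rw [CharP.cast_eq_zero_iff F p] at h
    have := Nat.le_of_dvd (by omega) h
    omega
  exact (mul_eq_zero.mp hsub).resolve_left hne

theorem der_sum_apply {ι : Type*} [DecidableEq ι] (s : Finset ι) (f : ι → Wn F p n) (a : TP F p n) :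
    (∑ i ∈ s, f i : Wn F p n) a = ∑ i ∈ s, (f i) a := by
  induction s using Finset.induction_on with
  | empty => simp
  | @insert b s hb ih =>
      rw [Finset.sum_insert hb, Finset.sum_insert hb, Derivation.add_apply, ih]

theorem d_apply (D : Fin n → Wn F p n) (hD : IsCoordDer F p n D) (q : ℕ)
    (f : MvPolynomial (Fin n) F) :
    (∑ i, (xv F p n i ^ q) • D i : Wn F p n) (Ideal.Quotient.mk (truncIdeal F p n) f) =
      Ideal.Quotient.mk (truncIdeal F p n) (∑ i, X i ^ q * pderiv i f) := by
  rw [der_sum_apply, map_sum]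
  refine Finset.sum_congr rfl fun i _ => ?_
  rw [Derivation.smul_apply, D_mk D hD, smul_eq_mul]
  have hxv : xv F p n i ^ q = Ideal.Quotient.mk (truncIdeal F p n) (X i ^ q) := by
    rw [map_pow]; rfl
  rw [hxv, ← map_mul]

theorem bracket_apply (D : Fin n → Wn F p n) (hD : IsCoordDer F p n D) (q : ℕ)
    (hq1 : 1 ≤ q)
    {w : Wn F p n} {g : MvPolynomial (Fin n) F} {k : Fin n}
    (hgk : Ideal.Quotient.mk (truncIdeal F p n) g = w (xv F p n k)) :
    ⁅w, ∑ i, (xv F p n i ^ q) • D i⁆ (xv F p n k) =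
      Ideal.Quotient.mk (truncIdeal F p n) (Phi q k g) := by
  rw [Derivation.commutator_apply]
  have hdx : (∑ i, (xv F p n i ^ q) • D i : Wn F p n) (xv F p n k) = xv F p n k ^ q := by
    have h1 : xv F p n k = Ideal.Quotient.mk (truncIdeal F p n) (X k) := rfl
    rw [h1, d_apply D hD]
    have h2 : (∑ i, X i ^ q * pderiv i (X k : MvPolynomial (Fin n) F)) = X k ^ q := by
      rw [Finset.sum_eq_single_of_mem k (Finset.mem_univ k)]
      · rw [pderiv_X_self, mul_one]
      · intro i _ hik
        rw [pderiv_X_of_ne (Ne.symm hik), mul_zero]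
    rw [h2, map_pow]
  rw [hdx, Derivation.leibniz_pow, ← hgk, d_apply D hD]
  have hxvp : xv F p n k ^ (q - 1) = Ideal.Quotient.mk (truncIdeal F p n) (X k ^ (q - 1)) := by
    rw [map_pow]; rfl
  rw [smul_eq_mul, hxvp, ← map_mul, ← map_nsmul, ← map_sub]
  rfl


theorem gradeW_bot (D : Fin n → Wn F p n) {m : ℕ} (hm : n * (p - 1) < m) :
    gradeW F p n D m = ⊥ := by
  rw [gradeW, Submodule.span_eq_bot]
  rintro w ⟨α, j, hα, hs, rfl⟩
  exfalso
  have : (∑ l, α l) ≤ n * (p - 1) := by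
    have h1 : (∑ l, α l) ≤ (Finset.univ : Finset (Fin n)).card • (p - 1) :=
      Finset.sum_le_card_nsmul _ _ _ (fun i _ => hα i)
    simpa [mul_comm] using h1
  omega

end Aux

end

/-- For `p > 2`: if `X = Σ X_m` (graded decomposition, `X_m` of degree `m − 1`)
centralizes `d_ν^{((p+1)/2)} = Σ xᵢ^{(p+1)/2} Dᵢ`, then `X_m = 0` for all
`m − 1 < (p − 1)/2`, i.e. for all `m < (p + 1)/2`. -/
theorem centralizer_d_nu_low_components_vanish (F : Type*) [Field F] (p n : ℕ)
    (hp : p.Prime) (hp2 : 2 < p) [CharP F p]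
    (D : Fin n → Wn F p n) (hD : IsCoordDer F p n D)
    (X : Wn F p n) (Xc : ℕ → Wn F p n)
    (hXc : ∀ m, Xc m ∈ gradeW F p n D m)
    (hsum : X = ∑ m ∈ Finset.range (n * (p - 1) + 1), Xc m)
    (hcent : ⁅X, ∑ i, (xv F p n i ^ ((p + 1) / 2)) • D i⁆ = 0) :
    ∀ m, m < (p + 1) / 2 → Xc m = 0 := by

  intro m hm
  have hoddp : p % 2 = 1 := Nat.odd_iff.mp (hp.odd_of_ne_two (by omega))
  set q : ℕ := (p + 1) / 2 with hq
  have h2q : 2 * q = p + 1 := by omega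
  have hq1 : 1 ≤ q := by omega
  have hqp : q < p := by omega
  have hp0 : 0 < p := by omega
  set N : ℕ := n * (p - 1) + 1 with hN
  set d : Wn F p n := ∑ i, (xv F p n i ^ q) • D i with hd
  by_cases hmN : m < N
  swap
  · have hbot : gradeW F p n D m = ⊥ := Aux.gradeW_bot D (by omega)
    have := hXc m
    rw [hbot, Submodule.mem_bot] at this
    exact this
  have hbr0 : ∀ k, ∑ m' ∈ Finset.range N, ⁅Xc m', d⁆ (xv F p n k) = 0 := by
    intro k
    let φ : Wn F p n →+ Wn F p n :=
      { toFun := fun w => ⁅w, d⁆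
        map_zero' := zero_lie (L := Wn F p n) d
        map_add' := fun a b => add_lie a b d }
    have h1 : ∑ m' ∈ Finset.range N, ⁅Xc m', d⁆ = (0 : Wn F p n) := by
      have h2 : ∑ m' ∈ Finset.range N, ⁅Xc m', d⁆ = φ (∑ m' ∈ Finset.range N, Xc m') :=
        (map_sum φ Xc (Finset.range N)).symm
      rw [h2, ← hsum]
      exact hcent
    have h3 : (∑ m' ∈ Finset.range N, ⁅Xc m', d⁆ : Wn F p n) (xv F p n k) = 0 := by
      rw [h1]; simp
    rw [Aux.der_sum_apply] at h3
    exact h3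
  have hval : ∀ m' k, ⁅Xc m', d⁆ (xv F p n k) ∈ Aux.Hgr F p n (m' + (q - 1)) := by
    intro m' k
    obtain ⟨g, hg, hgk⟩ := Aux.exists_red_homog (Aux.val_mem_Hgr hD hp0 (hXc m') k)
    rw [hd, Aux.bracket_apply D hD q hq1 hgk]
    exact Aux.mk_mem_Hgr (Aux.Phi_deg hq1 (fun β hβ => (hg β hβ).2) k)
  have hvanish : ∀ k, ⁅Xc m, d⁆ (xv F p n k) = 0 := by
    intro k
    have hind := Aux.indep_Hgr (fun j => ⁅Xc (j - (q - 1)), d⁆ (xv F p n k))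
      ((Finset.range N).image (· + (q - 1))) ?_ ?_
    · have hm' := hind (m + (q - 1))
        (Finset.mem_image.mpr ⟨m, Finset.mem_range.mpr hmN, rfl⟩)
      simpa [Nat.add_sub_cancel] using hm'
    · intro j hj
      obtain ⟨m', hm', rfl⟩ := Finset.mem_image.mp hj
      simpa [Nat.add_sub_cancel] using hval m' k
    · rw [Finset.sum_image (by intro a _ b _ h; exact Nat.add_right_cancel h)]
      have : ∀ m' ∈ Finset.range N,
          ⁅Xc (m' + (q - 1) - (q - 1)), d⁆ (xv F p n k) = ⁅Xc m', d⁆ (xv F p n k) := by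
        intro m' _
        rw [Nat.add_sub_cancel]
      rw [Finset.sum_congr rfl this]
      exact hbr0 k
  apply Aux.eq_zero_of_vanish
  intro k
  obtain ⟨g, hg, hgk⟩ := Aux.exists_red_homog (Aux.val_mem_Hgr hD hp0 (hXc m) k)
  have hbk := hvanish k
  rw [hd, Aux.bracket_apply D hD q hq1 hgk] at hbk
  have hP : Aux.Phi q k g = 0 :=
    Aux.red_eq_zero (Aux.Phi_red h2q hm (fun β hβ => (hg β hβ).2) k) hbk
  have hg0 : g = 0 := Aux.core hq1 hqp hm hp (fun β hβ => (hg β hβ).2) k hP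
  rw [← hgk, hg0, map_zero]
end
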